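/- arXiv:1207.2836 — 9 statements merged into one kernel-verified Lean document; each statement's English description precedes it below -/
import Mathlib

section
/- If h : X × X* → ℝ ∪ {±∞} is a proper, closed (norm-lower-semicontinuous) convex function, then D(J δ_{D(h)}) ⊆ 0⁺D(Jh), i.e. every point of the effective domain of J applied to the indicator of D(h) is a recession direction of the effective domain of Jh. -/
open NormedSpace Classical

noncomputable section

/-- effective domain of an extended-real-valued function -/
def edom {E : Type*} (f : E → EReal) : Set E := {x | f x < ⊤}

/-- indicator function (0 on the set, +∞ off it) -/
def indic {E : Type*} (C : Set E) : E → EReal := fun x => if x ∈ C then 0 else ⊤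

/-- convexity for EReal-valued functions -/
def ErConvex {E : Type*} [AddCommGroup E] [Module ℝ E] (f : E → EReal) : Prop :=
  ∀ x y : E, ∀ a b : ℝ, 0 ≤ a → 0 ≤ b → a + b = 1 →
    f (a • x + b • y) ≤ (a : EReal) * f x + (b : EReal) * f y

/-- recession cone of a set -/
def recc {E : Type*} [AddCommGroup E] [Module ℝ E] (C : Set E) : Set E :=
  {u | ∀ z ∈ C, ∀ t : ℝ, 0 ≤ t → z + t • u ∈ C}

variable (X : Type*) [NormedAddCommGroup X] [NormedSpace ℝ X]

/-- Fenchel conjugate of f : X → EReal, defined on the dual -/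
def conj1 (f : X → EReal) : StrongDual ℝ X → EReal :=
  fun p => ⨆ x : X, ((p x : EReal) - f x)

/-- Fenchel conjugate of h : X × X* → EReal, defined on X* × X** via
⟨(x,x*),(y*,y**)⟩ = ⟨x,y*⟩ + ⟨y**,x*⟩ -/
def conj2 (h : X × StrongDual ℝ X → EReal) : StrongDual ℝ X × StrongDual ℝ (StrongDual ℝ X) → EReal :=
  fun p => ⨆ z : X × StrongDual ℝ X, (((p.1 z.1 + p.2 z.2 : ℝ) : EReal) - h z)

/-- The J operation: (Jh)(x,x*) = h*(x*, x), with X canonically embedded in X** -/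
def Jop (h : X × StrongDual ℝ X → EReal) : X × StrongDual ℝ X → EReal :=
  fun z => conj2 X h (z.2, inclusionInDoubleDual ℝ X z.1)

/-- the duality product as an EReal-valued function on X × X* -/
def pairE : X × StrongDual ℝ X → EReal := fun z => ((z.2 z.1 : ℝ) : EReal)

/-- weak-* closure of a subset of the dual -/
def wcl (S : Set (StrongDual ℝ X)) : Set (StrongDual ℝ X) :=
  StrongDual.toWeakDual ⁻¹' closure (StrongDual.toWeakDual '' S)

/-- monotone subset of X × X* -/
def MonotoneSet (T : Set (X × StrongDual ℝ X)) : Prop :=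
  ∀ p ∈ T, ∀ q ∈ T, 0 ≤ (p.2 - q.2) (p.1 - q.1)

/-- maximal monotone subset of X × X* -/
def MaxMonotone (T : Set (X × StrongDual ℝ X)) : Prop :=
  MonotoneSet X T ∧ ∀ S : Set (X × StrongDual ℝ X), MonotoneSet X S → T ⊆ S → S = T

/-- the Fitzpatrick family of a maximal monotone operator: closed convex functions
majorizing the duality product and coinciding with it on T -/
def FitzFamily (T : Set (X × StrongDual ℝ X)) : Set ((X × StrongDual ℝ X) → EReal) :=
  {h | ErConvex h ∧ LowerSemicontinuous h ∧ (∀ z, pairE X z ≤ h z) ∧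
       ∀ z ∈ T, h z = pairE X z}

/-- lower semicontinuity with respect to the strong × weak-* topology on X × X* -/
def lscSW (h : X × StrongDual ℝ X → EReal) : Prop :=
  LowerSemicontinuous (fun p : X × WeakDual ℝ X => h (p.1, StrongDual.toWeakDual.symm p.2))

end

theorem statement1 (X : Type*) [NormedAddCommGroup X] [NormedSpace ℝ X] [CompleteSpace X]
    (h : X × StrongDual ℝ X → EReal) (hne_bot : ∀ z, h z ≠ ⊥) (hne_top : ∃ z, h z ≠ ⊤)
    (hlsc : LowerSemicontinuous h) (hconv : ErConvex h) :
    edom (Jop X (indic (edom h))) ⊆ recc (edom (Jop X h)) := by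
  obtain ⟨w0, hw0⟩ := hne_top
  intro z hz p hp t ht
  simp only [edom, Set.mem_setOf_eq, Jop, conj2, NormedSpace.dual_def] at hz hp ⊢
  set M : EReal := ⨆ w : X × StrongDual ℝ X,
      (((z.2 w.1 + w.2 z.1 : ℝ) : EReal) - indic (edom h) w) with hMdef
  set A : EReal := ⨆ w : X × StrongDual ℝ X,
      (((p.2 w.1 + w.2 p.1 : ℝ) : EReal) - h w) with hAdef
  have hw0e : w0 ∈ edom h := lt_top_iff_ne_top.mpr hw0
  have hw0r : h w0 = ((h w0).toReal : EReal) := (EReal.coe_toReal hw0 (hne_bot w0)).symm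
  -- A and M are not ⊥
  have hAbot : A ≠ ⊥ := by
    have := le_iSup (fun w : X × StrongDual ℝ X =>
      (((p.2 w.1 + w.2 p.1 : ℝ) : EReal) - h w)) w0
    rw [← hAdef] at this
    intro hA
    rw [hA, le_bot_iff, hw0r, ← EReal.coe_sub] at this
    exact (EReal.coe_ne_bot _) this
  have hMbot : M ≠ ⊥ := by
    have := le_iSup (fun w : X × StrongDual ℝ X =>
      (((z.2 w.1 + w.2 z.1 : ℝ) : EReal) - indic (edom h) w)) w0
    rw [← hMdef] at this
    intro hM
    rw [hM, le_bot_iff] at this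
    simp only [indic, hw0e, if_pos, sub_zero] at this
    exact (EReal.coe_ne_bot _) this
  have hAr : A = (A.toReal : EReal) := (EReal.coe_toReal hp.ne hAbot).symm
  have hMr : M = (M.toReal : EReal) := (EReal.coe_toReal hz.ne hMbot).symm
  refine lt_of_le_of_lt (iSup_le fun w => ?_) (EReal.coe_lt_top (A.toReal + t * M.toReal))
  by_cases hw : h w = ⊤
  · rw [hw, EReal.sub_top]; exact bot_le
  · have hwr : h w = ((h w).toReal : EReal) := (EReal.coe_toReal hw (hne_bot w)).symm
    have hwe : w ∈ edom h := lt_top_iff_ne_top.mpr hw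
    have h1 : p.2 w.1 + w.2 p.1 - (h w).toReal ≤ A.toReal := by
      have := le_iSup (fun w : X × StrongDual ℝ X =>
        (((p.2 w.1 + w.2 p.1 : ℝ) : EReal) - h w)) w
      rw [← hAdef, hwr, ← EReal.coe_sub, hAr, EReal.coe_le_coe_iff] at this
      exact this
    have h2 : z.2 w.1 + w.2 z.1 ≤ M.toReal := by
      have := le_iSup (fun w : X × StrongDual ℝ X =>
        (((z.2 w.1 + w.2 z.1 : ℝ) : EReal) - indic (edom h) w)) w
      rw [← hMdef] at this
      simp only [indic, hwe, if_pos, sub_zero] at this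
      rw [hMr, EReal.coe_le_coe_iff] at this
      exact this
    have h3 : t * (z.2 w.1 + w.2 z.1) ≤ t * M.toReal :=
      mul_le_mul_of_nonneg_left h2 ht
    have hlin : (p + t • z).2 w.1 + w.2 (p + t • z).1
        = (p.2 w.1 + w.2 p.1) + t * (z.2 w.1 + w.2 z.1) := by
      simp only [Prod.snd_add, Prod.fst_add, Prod.smul_snd, Prod.smul_fst,
        ContinuousLinearMap.add_apply, ContinuousLinearMap.coe_smul',
        Pi.smul_apply, smul_eq_mul, map_add, map_smul]
      ring
    rw [hlin, hwr, ← EReal.coe_sub, EReal.coe_le_coe_iff]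
    linarith
end

section
/- Let h : X × X* → ℝ ∪ {±∞} satisfy (Jh)(x,x*) ≥ ⟨x,x*⟩ for all (x,x*) ∈ X × X*. Then P₂(D(Jh)) = P₁(D(h*) ∩ (X* × X)) and this set is contained in the weak-* closure in X* of the convex hull of P₂(D(h)). -/
open NormedSpace Classical

open Topology in
private instance (X : Type*) [NormedAddCommGroup X] [NormedSpace ℝ X] :
    LocallyConvexSpace ℝ (WeakDual ℝ X) :=
  WeakBilin.locallyConvexSpace (B := topDualPairing ℝ X)

open Topology

/-- evaluation at a point as a linear functional on the weak-* dual -/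
noncomputable def evalWD (X : Type*) [NormedAddCommGroup X] [NormedSpace ℝ X] (x : X) :
    WeakDual ℝ X →ₗ[ℝ] ℝ where
  toFun w := w x
  map_add' _ _ := rfl
  map_smul' _ _ := rfl

lemma weakdual_dual_eval {X : Type*} [NormedAddCommGroup X] [NormedSpace ℝ X]
    (g : WeakDual ℝ X →L[ℝ] ℝ) : ∃ x₀ : X, ∀ w : WeakDual ℝ X, g w = w x₀ := by
  have hb := LinearMap.hasBasis_weakBilin (topDualPairing ℝ X)
  have hmem : g ⁻¹' Metric.ball (0 : ℝ) 1 ∈ 𝓝 (0 : WeakDual ℝ X) := by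
    have := g.continuous.continuousAt (x := 0)
    have h0 : g 0 = 0 := map_zero g
    exact this.preimage_mem_nhds (by rw [h0]; exact Metric.ball_mem_nhds _ one_pos)
  obtain ⟨U, hU, hUsub⟩ := hb.mem_iff.mp hmem
  obtain ⟨s, r, hr, rfl⟩ := (SeminormFamily.basisSets_iff _).mp hU
  -- g vanishes on the common kernel of evaluations at points of s
  have hker : ⨅ i : s, LinearMap.ker (evalWD X (i : X)) ≤ LinearMap.ker g.toLinearMap := by
    intro w hw
    simp only [Submodule.mem_iInf, LinearMap.mem_ker] at hw ⊢
    have hzero : ∀ t : ℝ, t • w ∈ (s.sup (topDualPairing ℝ X).toSeminormFamily).ball 0 r := by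
      intro t
      refine (Seminorm.mem_ball_zero (p := s.sup (topDualPairing ℝ X).toSeminormFamily)).mpr ?_
      apply Seminorm.finset_sup_apply_lt hr
      intro x hx
      have hwx : w x = 0 := hw ⟨x, hx⟩
      show ‖t * w x‖ < r
      rw [hwx, mul_zero, norm_zero]
      exact hr
    by_contra hgw
    have habs : ∀ t : ℝ, |t * g w| < 1 := by
      intro t
      have : g (t • w) ∈ Metric.ball (0 : ℝ) 1 := hUsub (hzero t)
      simp only [Set.mem_preimage, Metric.mem_ball, dist_zero_right] at this
      have he : g (t • w) = t * g w := by rw [map_smul]; rfl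
      rwa [he, Real.norm_eq_abs] at this
    have hG : 0 < |g w| := abs_pos.mpr hgw
    have h2 := habs (2 / |g w|)
    rw [abs_mul, abs_of_pos (by positivity : (0:ℝ) < 2 / |g w|),
      div_mul_cancel₀ _ hG.ne'] at h2
    linarith
  have hspan := mem_span_of_iInf_ker_le_ker (𝕜 := ℝ) (L := fun i : s => evalWD X (i : X))
    (K := g.toLinearMap) hker
  obtain ⟨c, hc⟩ := (Submodule.mem_span_range_iff_exists_fun ℝ).mp hspan
  refine ⟨∑ i : s, c i • (i : X), fun w => ?_⟩
  have := LinearMap.congr_fun hc w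
  simp only [LinearMap.coe_sum, Finset.sum_apply, LinearMap.smul_apply, smul_eq_mul] at this
  have h2 : w (∑ i : s, c i • (i : X)) = ∑ i : s, c i * w (i : X) := by
    rw [map_sum]
    congr 1
    ext i
    rw [map_smul]
    rfl
  rw [h2]
  exact this.symm

theorem statement2 (X : Type*) [NormedAddCommGroup X] [NormedSpace ℝ X] [CompleteSpace X]
    (h : X × StrongDual ℝ X → EReal) (hJ : ∀ z, pairE X z ≤ Jop X h z) :
    Prod.snd '' edom (Jop X h) =
      {y : StrongDual ℝ X | ∃ x : X, (y, inclusionInDoubleDual ℝ X x) ∈ edom (conj2 X h)} ∧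
    Prod.snd '' edom (Jop X h) ⊆ wcl X (convexHull ℝ (Prod.snd '' edom h)) := by
  constructor
  · ext y
    simp only [Set.mem_image, Set.mem_setOf_eq]
    constructor
    · rintro ⟨⟨x, y'⟩, hz, rfl⟩
      exact ⟨x, hz⟩
    · rintro ⟨x, hx⟩
      exact ⟨(x, y), hx, rfl⟩
  · rintro y ⟨⟨x, y'⟩, hxy, rfl⟩
    simp only at hxy ⊢
    set S : Set (StrongDual ℝ X) := Prod.snd '' edom h with hS
    by_contra hy
    -- separation in the weak-* topology
    have hmem : (StrongDual.toWeakDual y' : WeakDual ℝ X) ∉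
        closure (StrongDual.toWeakDual '' convexHull ℝ S) := hy
    have hconv : Convex ℝ (closure ((StrongDual.toWeakDual : StrongDual ℝ X ≃ₗ[ℝ] WeakDual ℝ X) ''
        convexHull ℝ S)) :=
      ((convex_convexHull ℝ S).linear_image
        (StrongDual.toWeakDual : StrongDual ℝ X ≃ₗ[ℝ] WeakDual ℝ X).toLinearMap).closure
    obtain ⟨g, u, hgy, hgs⟩ := geometric_hahn_banach_point_closed hconv isClosed_closure hmem
    obtain ⟨x₀, hx₀⟩ := weakdual_dual_eval g
    -- translate: y' x₀ < u < s x₀ for s ∈ convexHull S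
    rw [hx₀] at hgy
    have hsep : ∀ s ∈ convexHull ℝ S, u < s x₀ := by
      intro s hs
      have := hgs (StrongDual.toWeakDual s) (subset_closure ⟨s, hs, rfl⟩)
      rwa [hx₀] at this
    set a : X := -x₀ with ha
    set α : ℝ := -u with hα
    have hgy' : y' x₀ < u := hgy
    have hya : α < y' a := by
      simp only [ha, hα, map_neg]
      linarith
    have hza : ∀ z ∈ edom h, z.2 a ≤ α := by
      intro z hz
      have : u < z.2 x₀ := hsep z.2 (subset_convexHull ℝ S ⟨z, hz, rfl⟩)
      simp only [ha, hα, map_neg]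
      linarith
    -- the conjugate bound
    have hne_top : Jop X h (x, y') ≠ ⊤ := hxy.ne
    have hpair : pairE X (x, y') ≤ Jop X h (x, y') := hJ (x, y')
    have hne_bot : Jop X h (x, y') ≠ ⊥ := by
      intro hb
      rw [hb] at hpair
      exact (EReal.coe_ne_bot _) (le_bot_iff.mp hpair)
    obtain ⟨m, hm⟩ : ∃ m : ℝ, Jop X h (x, y') = (m : EReal) :=
      ⟨(Jop X h (x, y')).toReal, (EReal.coe_toReal hne_top hne_bot).symm⟩
    have hterm : ∀ z : X × StrongDual ℝ X,
        (((y' z.1 + z.2 x : ℝ) : EReal) - h z) ≤ (m : EReal) := by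
      intro z
      have := le_iSup (fun z : X × StrongDual ℝ X =>
        (((y' z.1 + (inclusionInDoubleDual ℝ X x) z.2 : ℝ) : EReal) - h z)) z
      rw [show (⨆ z : X × StrongDual ℝ X,
          (((y' z.1 + (inclusionInDoubleDual ℝ X x) z.2 : ℝ) : EReal) - h z))
          = Jop X h (x, y') from rfl, hm] at this
      simpa [dual_def] using this
    have hno_bot : ∀ z : X × StrongDual ℝ X, h z ≠ ⊥ := by
      intro z hzb
      have := hterm z
      rw [hzb, EReal.coe_sub_bot] at this
      exact (EReal.coe_ne_top m) (top_le_iff.mp this)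
    -- choose t
    have hpos : 0 < y' a - α := by linarith
    set t : ℝ := max 0 ((m - y' x + 1) / (y' a - α)) with ht
    have ht0 : 0 ≤ t := le_max_left _ _
    have htgt : m - y' x < t * (y' a - α) := by
      rcases le_or_gt 0 ((m - y' x + 1) / (y' a - α)) with hq | hq
      · have : t = (m - y' x + 1) / (y' a - α) := max_eq_right hq
        rw [this, div_mul_cancel₀ _ hpos.ne']
        linarith
      · have : t = 0 := max_eq_left hq.le
        have h1 : m - y' x + 1 < 0 := by
          by_contra hcon
          exact absurd (div_nonneg (by linarith) hpos.le) (not_le.mpr hq)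
        rw [this]
        linarith
    -- bound the conjugate at the shifted point
    have hbound : Jop X h (x + t • a, y') ≤ ((m + t * α : ℝ) : EReal) := by
      refine iSup_le fun z => ?_
      rcases eq_or_ne (h z) ⊤ with hzt | hzt
      · rw [hzt, EReal.sub_top]
        exact bot_le
      · have hzS : z ∈ edom h := lt_top_iff_ne_top.mpr hzt
        obtain ⟨r, hr⟩ : ∃ r : ℝ, h z = (r : EReal) :=
          ⟨(h z).toReal, (EReal.coe_toReal hzt (hno_bot z)).symm⟩
        have h1 : y' z.1 + z.2 x - r ≤ m := by
          have := hterm z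
          rw [hr, ← EReal.coe_sub, EReal.coe_le_coe_iff] at this
          linarith
        have h2 : z.2 a ≤ α := hza z hzS
        have heval : (inclusionInDoubleDual ℝ X (x + t • a)) z.2
            = z.2 x + t * z.2 a := by
          rw [dual_def]
          rw [map_add, map_smul]
          rfl
        rw [heval, hr, ← EReal.coe_sub, EReal.coe_le_coe_iff]
        have : t * z.2 a ≤ t * α := mul_le_mul_of_nonneg_left h2 ht0
        linarith
    -- contradiction with hJ
    have hlow : pairE X (x + t • a, y') ≤ Jop X h (x + t • a, y') := hJ _
    have : ((y' (x + t • a) : ℝ) : EReal) ≤ ((m + t * α : ℝ) : EReal) :=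
      le_trans hlow hbound
    rw [EReal.coe_le_coe_iff] at this
    rw [map_add, map_smul, smul_eq_mul] at this
    nlinarith
end

section
/- Let h : X × X* → ℝ ∪ {±∞} satisfy (Jh)(x,x*) ≥ ⟨x,x*⟩ for all (x,x*) ∈ X × X*. Then P₁(D(Jh)) = P₂(D(h*) ∩ (X* × X)) and this set is contained in the norm closure in X of the convex hull of P₁(D(h)). -/
open NormedSpace Classical

theorem statement3 (X : Type*) [NormedAddCommGroup X] [NormedSpace ℝ X] [CompleteSpace X]
    (h : X × StrongDual ℝ X → EReal) (hJ : ∀ z, pairE X z ≤ Jop X h z) :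
    Prod.fst '' edom (Jop X h) =
      {x : X | ∃ y : StrongDual ℝ X, (y, inclusionInDoubleDual ℝ X x) ∈ edom (conj2 X h)} ∧
    Prod.fst '' edom (Jop X h) ⊆ closure (convexHull ℝ (Prod.fst '' edom h)) := by
  constructor
  · ext x
    constructor
    · rintro ⟨z, hz, rfl⟩
      exact ⟨z.2, hz⟩
    · rintro ⟨y, hy⟩
      exact ⟨(x, y), hy, rfl⟩
  · rintro _ ⟨⟨x₀, xs⟩, hz, rfl⟩
    simp only [edom, Set.mem_setOf_eq] at hz
    by_contra hxc
    set C := closure (convexHull ℝ (Prod.fst '' edom h)) with hC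
    obtain ⟨g, c, hgc, hcx⟩ :=
      geometric_hahn_banach_closed_point
        ((convex_convexHull ℝ _).closure) isClosed_closure hxc
    -- K is finite
    set K := Jop X h (x₀, xs) with hK
    have hKbot : K ≠ ⊥ := by
      intro hb
      have := hJ (x₀, xs)
      rw [← hK, hb] at this
      exact absurd (le_bot_iff.mp this) (by simp [pairE])
    have hKtop : K ≠ ⊤ := hz.ne
    set M := K.toReal with hM
    have hMK : (M : EReal) = K := EReal.coe_toReal hKtop hKbot
    -- every point of edom h has first coordinate in C, hence g < c there
    have hbound : ∀ z : X × StrongDual ℝ X, h z < ⊤ → g z.1 < c := by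
      intro z hzt
      exact hgc z.1 (subset_closure (subset_convexHull ℝ _ ⟨z, hzt, rfl⟩))
    -- key estimate
    have key : ∀ t : ℝ, 0 ≤ t → Jop X h (x₀, xs + t • g) ≤ ((M + t * c : ℝ) : EReal) := by
      intro t ht
      refine iSup_le fun z => ?_
      by_cases hzt : h z < ⊤
      · -- h z is a real number (not ⊥, else K = ⊤)
        have hzb : h z ≠ ⊥ := by
          intro hb
          apply hKtop
          refine top_le_iff.mp ?_
          calc (⊤ : EReal) = ((xs z.1 + (inclusionInDoubleDual ℝ X x₀) z.2 : ℝ) : EReal) - h z := by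
                rw [hb, EReal.coe_sub_bot]
            _ ≤ K := le_iSup (fun z => ((xs z.1 + (inclusionInDoubleDual ℝ X x₀) z.2 : ℝ) : EReal) - h z) z
        set r := (h z).toReal with hr
        have hrz : (r : EReal) = h z := EReal.coe_toReal hzt.ne hzb
        have h1 : ((xs z.1 + (inclusionInDoubleDual ℝ X x₀) z.2 : ℝ) : EReal) - h z ≤ K :=
          le_iSup (fun z => ((xs z.1 + (inclusionInDoubleDual ℝ X x₀) z.2 : ℝ) : EReal) - h z) z
        rw [← hrz, ← EReal.coe_sub, ← hMK, EReal.coe_le_coe_iff] at h1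
        have h2 : g z.1 < c := hbound z hzt
        have h3 : t * g z.1 ≤ t * c := mul_le_mul_of_nonneg_left h2.le ht
        have happ : (xs + t • g) z.1 = xs z.1 + t * g z.1 := by
          simp [ContinuousLinearMap.add_apply, ContinuousLinearMap.smul_apply]
        calc (((xs + t • g) z.1 + (inclusionInDoubleDual ℝ X x₀) z.2 : ℝ) : EReal) - h z
            = (((xs + t • g) z.1 + (inclusionInDoubleDual ℝ X x₀) z.2 - r : ℝ) : EReal) := by
              rw [← hrz, EReal.coe_sub]
          _ ≤ ((M + t * c : ℝ) : EReal) := by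
              rw [EReal.coe_le_coe_iff, happ]
              linarith
      · have : h z = ⊤ := top_le_iff.mp (not_lt.mp hzt)
        rw [this, EReal.sub_top]
        exact bot_le
    -- contradiction via hJ at a large t
    have hd : 0 < g x₀ - c := by linarith
    set t := max 0 ((M - xs x₀ + 1) / (g x₀ - c)) with htdef
    have ht0 : 0 ≤ t := le_max_left _ _
    have ht1 : (M - xs x₀ + 1) / (g x₀ - c) ≤ t := le_max_right _ _
    have ht2 : M - xs x₀ + 1 ≤ t * (g x₀ - c) := by
      rw [div_le_iff₀ hd] at ht1
      linarith
    have hple := (hJ (x₀, xs + t • g)).trans (key t ht0)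
    have happ0 : (xs + t • g) x₀ = xs x₀ + t * g x₀ := by
      simp [ContinuousLinearMap.add_apply, ContinuousLinearMap.smul_apply]
    have : xs x₀ + t * g x₀ ≤ M + t * c := by
      have := hple
      simp only [pairE, happ0] at this
      exact_mod_cast this
    nlinarith
end

section
/- Let h : X × X* → ℝ ∪ {±∞} be convex and satisfy h(x,x*) ≥ ⟨x,x*⟩ for all (x,x*) ∈ X × X*. Then P₂(D(h)) is contained in the weak-* closure in X* of P₁(D(h*)), and P₁(D(h)) (viewed inside X** via the canonical embedding) is contained in the weak-* closure in X** of P₂(D(h*)). -/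
open NormedSpace Classical

section Aux

private lemma quad_bound (a₀ c r β : ℝ) (ha : 0 ≤ a₀) (hc : 0 < c) (hr : 0 ≤ r)
    (H : ∀ t : ℝ, -(t * β) ≤ a₀ + c / 2 * t ^ 2 * r ^ 2) :
    |β| ≤ Real.sqrt (2 * a₀ * c) * r := by
  rcases eq_or_lt_of_le hr with hr0 | hrpos
  · have hβ : β = 0 := by
      by_contra hb
      have h1 := H (-(a₀ + 1) / β)
      rw [← hr0] at h1
      have : -(-(a₀ + 1) / β * β) = a₀ + 1 := by field_simp
      rw [this] at h1
      nlinarith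
    rw [hβ, ← hr0, abs_zero, mul_zero]
  · have hu : (0:ℝ) < c * r ^ 2 := by positivity
    have key : β ^ 2 ≤ 2 * a₀ * c * r ^ 2 := by
      have h1 := H (-β / (c * r ^ 2))
      have e1 : -(-β / (c * r ^ 2) * β) = β ^ 2 / (c * r ^ 2) := by
        field_simp
      have e2 : c / 2 * (-β / (c * r ^ 2)) ^ 2 * r ^ 2 = β ^ 2 / (2 * (c * r ^ 2)) := by
        field_simp
      rw [e1, e2] at h1
      have h2 : β ^ 2 / (2 * (c * r ^ 2)) ≤ a₀ := by
        have e3 : β ^ 2 / (c * r ^ 2) = 2 * (β ^ 2 / (2 * (c * r ^ 2))) := by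
          field_simp
        linarith [e3 ▸ h1]
      have h3 := (div_le_iff₀ (by positivity : (0:ℝ) < 2 * (c * r ^ 2))).1 h2
      nlinarith
    calc |β| = Real.sqrt (β ^ 2) := (Real.sqrt_sq_eq_abs β).symm
      _ ≤ Real.sqrt (2 * a₀ * c * r ^ 2) := Real.sqrt_le_sqrt key
      _ = Real.sqrt (2 * a₀ * c) * r := by
          rw [Real.sqrt_mul (by positivity), Real.sqrt_sq hrpos.le]

private lemma normsq_combo {E : Type*} [SeminormedAddCommGroup E] [NormedSpace ℝ E]
    (a b : ℝ) (ha : 0 ≤ a) (hb : 0 ≤ b) (hab : a + b = 1) (v w c : E) :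
    ‖a • v + b • w - c‖ ^ 2 ≤ a * ‖v - c‖ ^ 2 + b * ‖w - c‖ ^ 2 := by
  have hc : a • v + b • w - c = a • (v - c) + b • (w - c) := by
    have h : a • c + b • c = c := by rw [← add_smul, hab, one_smul]
    rw [smul_sub, smul_sub]
    nth_rewrite 1 [← h]
    abel
  have h1 : ‖a • v + b • w - c‖ ≤ a * ‖v - c‖ + b * ‖w - c‖ := by
    rw [hc]
    calc ‖a • (v - c) + b • (w - c)‖ ≤ ‖a • (v - c)‖ + ‖b • (w - c)‖ := norm_add_le _ _
      _ = a * ‖v - c‖ + b * ‖w - c‖ := by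
          rw [norm_smul, norm_smul, Real.norm_of_nonneg ha, Real.norm_of_nonneg hb]
  nlinarith [norm_nonneg (a • v + b • w - c), norm_nonneg (v - c), norm_nonneg (w - c),
    mul_nonneg ha hb, sq_nonneg (‖v - c‖ - ‖w - c‖)]

private lemma comb_neg {a b x y : ℝ} (ha : 0 ≤ a) (hb : 0 ≤ b) (hab : a + b = 1)
    (hx : x < 0) (hy : y < 0) : a * x + b * y < 0 := by
  rcases eq_or_lt_of_le ha with h | h
  · rw [← h]; have hb1 : b = 1 := by linarith
    rw [hb1]; simp; linarith
  · have h1 : a * x < 0 := mul_neg_of_pos_of_neg h hx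
    have h2 : b * y ≤ 0 := mul_nonpos_of_nonneg_of_nonpos hb hy.le
    linarith

set_option maxHeartbeats 2000000 in
private lemma key_lemma (X : Type*) [NormedAddCommGroup X] [NormedSpace ℝ X]
    (h : X × StrongDual ℝ X → EReal) (hconv : ErConvex h) (hge : ∀ z, pairE X z ≤ h z)
    (x₀ : X) (u₀ : StrongDual ℝ X) (hx : h (x₀, u₀) < ⊤) (ε : ℝ) (hε : 0 < ε) :
    ∃ p : StrongDual ℝ X × StrongDual ℝ (StrongDual ℝ X), p ∈ edom (conj2 X h) ∧
      ‖p.1 - u₀‖ ≤ Real.sqrt (2 * ((h (x₀, u₀)).toReal - u₀ x₀) * (1 / ε)) ∧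
      ‖p.2 - inclusionInDoubleDual ℝ X x₀‖ ≤
        Real.sqrt (2 * ((h (x₀, u₀)).toReal - u₀ x₀) * ε) := by
  classical
  -- quadratic and affine auxiliary functions
  set qq : X × StrongDual ℝ X → ℝ := fun w => 1 / (2 * ε) * ‖w.1 - x₀‖ ^ 2 + ε / 2 * ‖w.2 - u₀‖ ^ 2 with hqq
  set ll : X × StrongDual ℝ X → ℝ := fun w => u₀ w.1 + w.2 x₀ - u₀ x₀ with hll
  have hge' : ∀ z : X × StrongDual ℝ X, ((z.2 z.1 : ℝ) : EReal) ≤ h z := hge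
  have hbot : ∀ w : X × StrongDual ℝ X, h w ≠ ⊥ := fun w => ((EReal.bot_lt_coe _).trans_le (hge' w)).ne'
  set M : ℝ := (h (x₀, u₀)).toReal with hMdef
  have hM : h (x₀, u₀) = (M : EReal) := (EReal.coe_toReal hx.ne (hbot _)).symm
  have hqq0 : qq (x₀, u₀) = 0 := by simp [hqq]
  have hll0 : ll (x₀, u₀) = u₀ x₀ := by simp [hll]
  have hqqnn : ∀ w : X × StrongDual ℝ X, 0 ≤ qq w := fun w => by
    have h1 : (0:ℝ) ≤ 1 / (2 * ε) := by positivity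
    have h2 : (0:ℝ) ≤ ε / 2 := by positivity
    positivity
  -- pairing estimate
  have hpair : ∀ w : X × StrongDual ℝ X, ll w - qq w ≤ w.2 w.1 := by
    intro w
    have h1 : |(w.2 - u₀) (w.1 - x₀)| ≤ ‖w.1 - x₀‖ * ‖w.2 - u₀‖ := by
      calc |(w.2 - u₀) (w.1 - x₀)| ≤ ‖w.2 - u₀‖ * ‖w.1 - x₀‖ :=
            (w.2 - u₀).le_opNorm (w.1 - x₀)
        _ = ‖w.1 - x₀‖ * ‖w.2 - u₀‖ := mul_comm _ _
    have h2 : ‖w.1 - x₀‖ * ‖w.2 - u₀‖ ≤ qq w := by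
      have hsq := sq_nonneg (‖w.1 - x₀‖ - ε * ‖w.2 - u₀‖)
      have hε' : (0:ℝ) < 2 * ε := by linarith
      rw [← mul_le_mul_iff_of_pos_left hε']
      have e : 2 * ε * qq w = ‖w.1 - x₀‖ ^ 2 + ε ^ 2 * ‖w.2 - u₀‖ ^ 2 := by
        simp only [hqq]
        field_simp
      rw [e]
      nlinarith
    have h3 : (w.2 - u₀) (w.1 - x₀) = w.2 w.1 - ll w := by
      simp [ContinuousLinearMap.sub_apply, map_sub, hll]; ring
    have h4 := (abs_le.1 h1).1
    rw [h3] at h4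
    linarith
  -- the two convex sets
  set S : Set ((X × StrongDual ℝ X) × ℝ) := {p | p.2 + qq p.1 < 0} with hS
  set T : Set ((X × StrongDual ℝ X) × ℝ) := {p | h p.1 ≤ ((p.2 + ll p.1 : ℝ) : EReal)} with hT
  have hSconv : Convex ℝ S := by
    intro p hp r hr a b ha hb hab
    simp only [hS, Set.mem_setOf_eq] at hp hr ⊢
    have hq1 : qq (a • p.1 + b • r.1) ≤ a * qq p.1 + b * qq r.1 := by
      have e1 := normsq_combo a b ha hb hab p.1.1 r.1.1 x₀
      have e2 := normsq_combo a b ha hb hab p.1.2 r.1.2 u₀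
      have c1 : (0:ℝ) ≤ 1 / (2 * ε) := by positivity
      have c2 : (0:ℝ) ≤ ε / 2 := by positivity
      simp only [hqq, Prod.fst_add, Prod.snd_add, Prod.smul_fst, Prod.smul_snd]
      nlinarith [mul_le_mul_of_nonneg_left e1 c1, mul_le_mul_of_nonneg_left e2 c2]
    have hcomb := comb_neg ha hb hab hp hr
    have : (a • p + b • r).2 = a * p.2 + b * r.2 := by
      simp [Prod.smul_snd, smul_eq_mul]
    rw [this]
    calc a * p.2 + b * r.2 + qq ((a • p + b • r).1)
        ≤ a * p.2 + b * r.2 + (a * qq p.1 + b * qq r.1) := by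
          have : (a • p + b • r).1 = a • p.1 + b • r.1 := by simp
          rw [this]; linarith [hq1]
      _ = a * (p.2 + qq p.1) + b * (r.2 + qq r.1) := by ring
      _ < 0 := hcomb
  have hTconv : Convex ℝ T := by
    intro p hp r hr a b ha hb hab
    simp only [hT, Set.mem_setOf_eq] at hp hr ⊢
    have hp1t : h p.1 ≠ ⊤ := (lt_of_le_of_lt hp (EReal.coe_lt_top _)).ne
    have hr1t : h r.1 ≠ ⊤ := (lt_of_le_of_lt hr (EReal.coe_lt_top _)).ne
    set ρ₁ : ℝ := (h p.1).toReal with hρ₁def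
    set ρ₂ : ℝ := (h r.1).toReal with hρ₂def
    have hρ₁ : h p.1 = (ρ₁ : EReal) := (EReal.coe_toReal hp1t (hbot _)).symm
    have hρ₂ : h r.1 = (ρ₂ : EReal) := (EReal.coe_toReal hr1t (hbot _)).symm
    have e1 : ρ₁ ≤ p.2 + ll p.1 := by
      rw [hρ₁] at hp; exact EReal.coe_le_coe_iff.1 hp
    have e2 : ρ₂ ≤ r.2 + ll r.1 := by
      rw [hρ₂] at hr; exact EReal.coe_le_coe_iff.1 hr
    have hcv := hconv p.1 r.1 a b ha hb hab
    rw [hρ₁, hρ₂, ← EReal.coe_mul, ← EReal.coe_mul, ← EReal.coe_add] at hcv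
    have hfst : (a • p + b • r).1 = a • p.1 + b • r.1 := by simp
    have hsnd : (a • p + b • r).2 = a * p.2 + b * r.2 := by simp [smul_eq_mul]
    rw [hfst, hsnd]
    refine le_trans hcv ?_
    rw [EReal.coe_le_coe_iff]
    have hllc : ll (a • p.1 + b • r.1) = a * ll p.1 + b * ll r.1 := by
      simp only [hll, Prod.fst_add, Prod.snd_add, Prod.smul_fst, Prod.smul_snd,
        map_add, map_smul, ContinuousLinearMap.add_apply, ContinuousLinearMap.coe_smul',
        Pi.smul_apply, smul_eq_mul]
      linear_combination (u₀ x₀) * hab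
    rw [hllc]
    nlinarith [mul_le_mul_of_nonneg_left e1 ha, mul_le_mul_of_nonneg_left e2 hb]
  have hdisj : Disjoint S T := by
    rw [Set.disjoint_left]
    rintro p hpS hpT
    simp only [hS, hT, Set.mem_setOf_eq] at hpS hpT
    have h3 : (p.1.2 p.1.1 : ℝ) ≤ p.2 + ll p.1 :=
      EReal.coe_le_coe_iff.1 ((hge' p.1).trans hpT)
    have h4 := hpair p.1
    linarith
  have hSopen : IsOpen S := by
    have hcont : Continuous (fun p : (X × StrongDual ℝ X) × ℝ => p.2 + qq p.1) := by
      apply continuous_snd.add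
      rw [hqq]
      fun_prop
    exact isOpen_lt (by exact hcont) continuous_const
  obtain ⟨f, u, hfS, hfT⟩ := geometric_hahn_banach_open hSconv hSopen hTconv hdisj
  set s : ℝ := f ((0, 0), 1) with hsdef
  have hflin : ∀ (w : X × StrongDual ℝ X) (t : ℝ), f (w, t) = f (w, 0) + t * s := by
    intro w t
    have e : ((w, t) : (X × StrongDual ℝ X) × ℝ) = (w, 0) + t • ((0, 0), 1) := by
      simp [Prod.ext_iff]
    rw [e, map_add, map_smul, smul_eq_mul]
  have hfS' : ∀ (w : X × StrongDual ℝ X) (t : ℝ), t + qq w < 0 → f (w, 0) + t * s < u := by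
    intro w t ht
    have := hfS (w, t) ht
    rwa [hflin] at this
  have hfT' : ∀ (w : X × StrongDual ℝ X) (t : ℝ), h w ≤ ((t + ll w : ℝ) : EReal) → u ≤ f (w, 0) + t * s := by
    intro w t ht
    have : ((w, t) : (X × StrongDual ℝ X) × ℝ) ∈ T := ht
    have := hfT (w, t) this
    rwa [hflin] at this
  -- s > 0
  have hs : 0 < s := by
    rcases lt_trichotomy s 0 with hneg | hzero | hpos
    · exfalso
      set t : ℝ := min (-1) ((u - f ((x₀, u₀), 0)) / s) with htdef
      have ht : t + qq (x₀, u₀) < 0 := by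
        rw [hqq0, add_zero]
        exact lt_of_le_of_lt (min_le_left _ _) (by norm_num)
      have h1 := hfS' (x₀, u₀) t ht
      have h2 : t ≤ (u - f ((x₀, u₀), 0)) / s := min_le_right _ _
      have h3 : u - f ((x₀, u₀), 0) ≤ t * s := (le_div_iff_of_neg hneg).1 h2
      linarith
    · exfalso
      have h1 := hfS' (x₀, u₀) (-1) (by rw [hqq0]; norm_num)
      have h2 := hfT' (x₀, u₀) (M - u₀ x₀) (by rw [hll0]; rw [hM]; norm_num)
      rw [hzero] at h1 h2
      simp at h1 h2
      linarith
    · exact hpos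
  -- quantitative separation facts
  have hA : ∀ w : X × StrongDual ℝ X, f (w, 0) - qq w * s ≤ u := by
    intro w
    by_contra hcon
    push_neg at hcon
    set δ : ℝ := (f (w, 0) - qq w * s - u) / s with hδdef
    have hδpos : 0 < δ := div_pos (by linarith) hs
    have ht : (-qq w - δ) + qq w < 0 := by linarith
    have h1 := hfS' w (-qq w - δ) ht
    have hδs : δ * s = f (w, 0) - qq w * s - u := by
      rw [hδdef, div_mul_cancel₀ _ hs.ne']
    nlinarith
  have hB : ∀ w : X × StrongDual ℝ X, h w ≠ ⊤ → u ≤ f (w, 0) + ((h w).toReal - ll w) * s := by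
    intro w hw
    apply hfT' w
    rw [sub_add_cancel, EReal.coe_toReal hw (hbot w)]
  -- a₀
  set F₀ : ℝ := f ((x₀, u₀), 0) with hF₀def
  have hFu : F₀ ≤ u := by
    have := hA (x₀, u₀)
    rw [hqq0] at this; linarith
  have hBM : u ≤ F₀ + (M - u₀ x₀) * s := by
    have := hB (x₀, u₀) hx.ne
    rwa [hll0, ← hMdef] at this
  set a₀ : ℝ := (u - F₀) / s with ha₀def
  have ha₀nn : 0 ≤ a₀ := div_nonneg (by linarith) hs.le
  have ha₀M : a₀ ≤ M - u₀ x₀ := by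
    rw [ha₀def, div_le_iff₀ hs]
    linarith
  -- the dual elements
  set y1 : StrongDual ℝ X := (-(s⁻¹)) • (f.comp (((ContinuousLinearMap.inl ℝ (X × StrongDual ℝ X) ℝ).comp
      (ContinuousLinearMap.inl ℝ X (StrongDual ℝ X))))) with hy1def
  set y2 : StrongDual ℝ (StrongDual ℝ X) := (-(s⁻¹)) • (f.comp (((ContinuousLinearMap.inl ℝ (X × StrongDual ℝ X) ℝ).comp
      (ContinuousLinearMap.inr ℝ X (StrongDual ℝ X))))) with hy2def
  have hy1app : ∀ v : X, y1 v = -(s⁻¹) * f ((v, 0), 0) := by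
    intro v; simp [hy1def]
  have hy2app : ∀ v : StrongDual ℝ X, y2 v = -(s⁻¹) * f ((0, v), 0) := by
    intro v; simp [hy2def]
  -- bound for y2
  have hy2bd : ∀ v : StrongDual ℝ X, |y2 v| ≤ Real.sqrt (2 * a₀ * ε) * ‖v‖ := by
    intro v
    apply quad_bound a₀ ε ‖v‖ (y2 v) ha₀nn hε (norm_nonneg v)
    intro t
    have h1 := hA (x₀, u₀ + t • v)
    have e1 : f (((x₀, u₀ + t • v), 0) : (X × StrongDual ℝ X) × ℝ) = F₀ + t * f ((0, v), 0) := by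
      have e : (((x₀, u₀ + t • v), 0) : (X × StrongDual ℝ X) × ℝ) = ((x₀, u₀), 0) + t • ((0, v), 0) := by
        simp [Prod.ext_iff]
      rw [e, map_add, map_smul, smul_eq_mul, hF₀def]
    have e2 : qq (x₀, u₀ + t • v) = ε / 2 * t ^ 2 * ‖v‖ ^ 2 := by
      simp [hqq, norm_smul, mul_pow]
      ring
    rw [e1, e2] at h1
    have e3 : f ((0, v), 0) = -s * y2 v := by
      rw [hy2app]; field_simp
    rw [e3] at h1
    have key : (-(t * y2 v)) * s ≤ (a₀ + ε / 2 * t ^ 2 * ‖v‖ ^ 2) * s := by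
      have ha₀s : a₀ * s = u - F₀ := by
        rw [ha₀def, div_mul_cancel₀ _ hs.ne']
      nlinarith
    exact (mul_le_mul_iff_of_pos_right hs).1 key
  -- bound for y1
  have hy1bd : ∀ v : X, |y1 v| ≤ Real.sqrt (2 * a₀ * (1/ε)) * ‖v‖ := by
    intro v
    apply quad_bound a₀ (1/ε) ‖v‖ (y1 v) ha₀nn (by positivity) (norm_nonneg v)
    intro t
    have h1 := hA (x₀ + t • v, u₀)
    have e1 : f (((x₀ + t • v, u₀), 0) : (X × StrongDual ℝ X) × ℝ) = F₀ + t * f ((v, 0), 0) := by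
      have e : (((x₀ + t • v, u₀), 0) : (X × StrongDual ℝ X) × ℝ) = ((x₀, u₀), 0) + t • ((v, 0), 0) := by
        simp [Prod.ext_iff]
      rw [e, map_add, map_smul, smul_eq_mul, hF₀def]
    have e2 : qq (x₀ + t • v, u₀) = (1/ε) / 2 * t ^ 2 * ‖v‖ ^ 2 := by
      simp [hqq, norm_smul, mul_pow]
      field_simp
    rw [e1, e2] at h1
    have e3 : f ((v, 0), 0) = -s * y1 v := by
      rw [hy1app]; field_simp
    rw [e3] at h1
    have key : (-(t * y1 v)) * s ≤ (a₀ + (1/ε) / 2 * t ^ 2 * ‖v‖ ^ 2) * s := by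
      have ha₀s : a₀ * s = u - F₀ := by
        rw [ha₀def, div_mul_cancel₀ _ hs.ne']
      nlinarith
    exact (mul_le_mul_iff_of_pos_right hs).1 key
  -- the point
  refine ⟨(u₀ + y1, inclusionInDoubleDual ℝ X x₀ + y2), ?_, ?_, ?_⟩
  · -- membership in edom (conj2 X h)
    have hbound : conj2 X h (u₀ + y1, inclusionInDoubleDual ℝ X x₀ + y2)
        ≤ ((u₀ x₀ - u / s : ℝ) : EReal) := by
      rw [conj2]
      apply iSup_le
      intro z
      have epair : (u₀ + y1) z.1 + (inclusionInDoubleDual ℝ X x₀ + y2) z.2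
          = ll z + u₀ x₀ - s⁻¹ * f (z, 0) := by
        have ef : f ((z.1, 0), 0) + f ((0, z.2), 0) = f (z, 0) := by
          rw [← map_add]
          congr 1
          simp [Prod.ext_iff]
        simp only [ContinuousLinearMap.add_apply]
        rw [hy1app, hy2app, dual_def]
        simp only [hll]
        linear_combination (-(s⁻¹)) * ef
      rcases eq_or_ne (h z) ⊤ with hz | hz
      · rw [hz, sub_eq_add_neg, EReal.neg_top, EReal.add_bot]
        exact bot_le
      · rw [← EReal.coe_toReal hz (hbot z), ← EReal.coe_sub, EReal.coe_le_coe_iff, epair]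
        have h1 := hB z hz
        have h2 : (u - f (z, 0)) / s ≤ (h z).toReal - ll z := by
          rw [div_le_iff₀ hs]; linarith
        have h3 : (u - f (z, 0)) / s = u / s - f (z, 0) / s := by ring
        have h4 : s⁻¹ * f (z, 0) = f (z, 0) / s := by ring
        rw [h4]
        linarith [h2, h3 ▸ h2]
    rw [edom, Set.mem_setOf_eq]
    exact lt_of_le_of_lt hbound (EReal.coe_lt_top _)
  · -- first bound
    have : (u₀ + y1, inclusionInDoubleDual ℝ X x₀ + y2).1 - u₀ = y1 := by
      simp
    rw [this]
    have hn : ‖y1‖ ≤ Real.sqrt (2 * a₀ * (1/ε)) := by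
      apply ContinuousLinearMap.opNorm_le_bound _ (by positivity)
      intro v
      rw [Real.norm_eq_abs]
      exact hy1bd v
    refine hn.trans (Real.sqrt_le_sqrt ?_)
    have : (0:ℝ) ≤ 1/ε := by positivity
    nlinarith [ha₀M, ha₀nn]
  · -- second bound
    have : (u₀ + y1, inclusionInDoubleDual ℝ X x₀ + y2).2 - inclusionInDoubleDual ℝ X x₀ = y2 := by
      simp
    rw [this]
    have hn : ‖y2‖ ≤ Real.sqrt (2 * a₀ * ε) := by
      apply ContinuousLinearMap.opNorm_le_bound _ (by positivity)
      intro v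
      rw [Real.norm_eq_abs]
      exact hy2bd v
    refine hn.trans (Real.sqrt_le_sqrt ?_)
    nlinarith [ha₀M, ha₀nn]

end Aux

theorem statement4 (X : Type*) [NormedAddCommGroup X] [NormedSpace ℝ X] [CompleteSpace X]
    (h : X × StrongDual ℝ X → EReal) (hconv : ErConvex h) (hge : ∀ z, pairE X z ≤ h z) :
    Prod.snd '' edom h ⊆ wcl X (Prod.fst '' edom (conj2 X h)) ∧
    (inclusionInDoubleDual ℝ X) '' (Prod.fst '' edom h) ⊆
      wcl (StrongDual ℝ X) (Prod.snd '' edom (conj2 X h)) := by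
  constructor
  · rintro v ⟨w, hw, rfl⟩
    have hwx : h (w.1, w.2) < ⊤ := by rw [Prod.mk.eta]; exact hw
    simp only [wcl, Set.mem_preimage]
    apply image_closure_subset_closure_image Dual.toWeakDual_continuous
    refine ⟨w.2, ?_, rfl⟩
    rw [Metric.mem_closure_iff]
    intro δ hδ
    set M' : ℝ := (h (w.1, w.2)).toReal - w.2 w.1 with hM'
    set D : ℝ := 2 * max M' 0 + 1 with hD
    have hmax : (0:ℝ) ≤ max M' 0 := le_max_right _ _
    have hDpos : 0 < D := by positivity
    set ε : ℝ := D / δ ^ 2 with hεdef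
    have hεpos : 0 < ε := by positivity
    obtain ⟨p, hp, h1, h2⟩ := key_lemma X h hconv hge w.1 w.2 hwx ε hεpos
    rw [← hM'] at h1
    refine ⟨p.1, ⟨p, hp, rfl⟩, ?_⟩
    rw [dist_eq_norm, ← norm_sub_rev]
    calc ‖p.1 - w.2‖ ≤ Real.sqrt (2 * M' * (1/ε)) := h1
      _ < δ := by
        rw [Real.sqrt_lt' hδ]
        have e : 2 * M' * (1/ε) = (2 * M' * δ ^ 2) / D := by
          rw [hεdef, one_div_div]; ring
        rw [e, div_lt_iff₀ hDpos]
        have hMle : M' ≤ max M' 0 := le_max_left _ _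
        nlinarith [mul_le_mul_of_nonneg_right hMle (sq_nonneg δ), pow_pos hδ 2]
  · rintro y ⟨x, ⟨w, hw, rfl⟩, rfl⟩
    have hwx : h (w.1, w.2) < ⊤ := by rw [Prod.mk.eta]; exact hw
    simp only [wcl, Set.mem_preimage]
    apply image_closure_subset_closure_image Dual.toWeakDual_continuous
    refine ⟨inclusionInDoubleDual ℝ X w.1, ?_, rfl⟩
    rw [Metric.mem_closure_iff]
    intro δ hδ
    set M' : ℝ := (h (w.1, w.2)).toReal - w.2 w.1 with hM'
    set D : ℝ := 2 * max M' 0 + 1 with hD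
    have hmax : (0:ℝ) ≤ max M' 0 := le_max_right _ _
    have hDpos : 0 < D := by positivity
    set ε : ℝ := δ ^ 2 / D with hεdef
    have hεpos : 0 < ε := by positivity
    obtain ⟨p, hp, h1, h2⟩ := key_lemma X h hconv hge w.1 w.2 hwx ε hεpos
    rw [← hM'] at h2
    refine ⟨p.2, ⟨p, hp, rfl⟩, ?_⟩
    rw [dist_eq_norm, ← norm_sub_rev]
    calc ‖p.2 - inclusionInDoubleDual ℝ X w.1‖ ≤ Real.sqrt (2 * M' * ε) := h2
      _ < δ := by
        rw [Real.sqrt_lt' hδ]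
        have e : 2 * M' * ε = (2 * M' * δ ^ 2) / D := by
          rw [hεdef]; ring
        rw [e, div_lt_iff₀ hDpos]
        have hMle : M' ≤ max M' 0 := le_max_left _ _
        nlinarith [mul_le_mul_of_nonneg_right hMle (sq_nonneg δ), pow_pos hδ 2]
end

section
/- Let h : X × X* → ℝ ∪ {+∞} be a proper, closed (norm-lower-semicontinuous) convex function and 0 ≤ L < ∞. If P₁(D(h*)) ⊆ B_{X*}[L], then h(x, x*) ≤ h(z, x*) + L‖x − z‖ for all x, z ∈ X and all x* ∈ X*, and consequently D(h) = X × P₂(D(h)). -/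
open NormedSpace Classical

private lemma ereal_le_coe_of_forall {a : EReal} {b : ℝ}
    (h : ∀ r : ℝ, (r : EReal) < a → r ≤ b) : a ≤ (b : EReal) := by
  by_contra hc
  push_neg at hc
  obtain ⟨r, hbr, hra⟩ := EReal.exists_between_coe_real hc
  exact absurd (h r hra) (not_le.2 (by exact_mod_cast hbr))

private lemma div_trick {a t u N : ℝ} (hN : 0 < N) (hle : a - t * N ≤ u) :
    N⁻¹ * a - t ≤ u / N := by
  rw [sub_le_iff_le_add, inv_mul_le_iff₀ hN]
  have h2 : N * (u / N + t) = u + t * N := by field_simp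
  rw [h2]; linarith

private lemma div_trick' {a r u N : ℝ} (hN : 0 < N) (hlt : u < a - r * N) :
    u / N < N⁻¹ * a - r := by
  have h2 : u / N < (a - r * N) / N := div_lt_div_of_pos_right hlt hN
  have h3 : (a - r * N) / N = a / N - r := by field_simp
  rw [show N⁻¹ * a = a / N by rw [div_eq_mul_inv]; ring]
  rw [h3] at h2; linarith

private lemma sep_lemma {E : Type*} [NormedAddCommGroup E] [NormedSpace ℝ E]
    (h : E → EReal) (hne_bot : ∀ z, h z ≠ ⊥)
    (hlsc : LowerSemicontinuous h) (hconv : ErConvex h)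
    {e₀ : E} (he₀ : h e₀ ≠ ⊤)
    (w : E) (r : ℝ) (hr : (r : EReal) < h w) :
    ∃ (y : StrongDual ℝ E) (c : ℝ),
      (∀ (e : E) (t : ℝ), h e ≤ (t : EReal) → y e - t ≤ c) ∧ c < y w - r := by
  set epi : Set (E × ℝ) := {p | h p.1 ≤ ((p.2 : ℝ) : EReal)} with hepi
  -- epi is closed
  have hcl : IsClosed epi := by
    have h1 : IsClosed {p : E × EReal | h p.1 ≤ p.2} := hlsc.isClosed_epigraph
    have h2 : Continuous (fun p : E × ℝ => (p.1, (p.2 : EReal))) :=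
      continuous_fst.prodMk (continuous_coe_real_ereal.comp continuous_snd)
    exact h1.preimage h2
  -- epi is convex
  have hcv : Convex ℝ epi := by
    rintro ⟨e₁, t₁⟩ hp ⟨e₂, t₂⟩ hq a b ha hb hab
    simp only [hepi, Set.mem_setOf_eq] at hp hq ⊢
    have he₁top : h e₁ ≠ ⊤ := (lt_of_le_of_lt hp (EReal.coe_lt_top t₁)).ne
    have he₂top : h e₂ ≠ ⊤ := (lt_of_le_of_lt hq (EReal.coe_lt_top t₂)).ne
    set s₁ := (h e₁).toReal
    set s₂ := (h e₂).toReal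
    have he₁ : h e₁ = (s₁ : EReal) := (EReal.coe_toReal he₁top (hne_bot e₁)).symm
    have he₂ : h e₂ = (s₂ : EReal) := (EReal.coe_toReal he₂top (hne_bot e₂)).symm
    have hs₁ : s₁ ≤ t₁ := by rw [he₁] at hp; exact_mod_cast hp
    have hs₂ : s₂ ≤ t₂ := by rw [he₂] at hq; exact_mod_cast hq
    have := hconv e₁ e₂ a b ha hb hab
    rw [he₁, he₂] at this
    refine le_trans this ?_
    rw [← EReal.coe_mul, ← EReal.coe_mul, ← EReal.coe_add]
    have : a • t₁ + b • t₂ = a * t₁ + b * t₂ := by simp [smul_eq_mul]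
    simp only [Prod.smul_mk, Prod.mk_add_mk, smul_eq_mul]
    exact_mod_cast add_le_add (mul_le_mul_of_nonneg_left hs₁ ha)
      (mul_le_mul_of_nonneg_left hs₂ hb)
  set t₀ := (h e₀).toReal
  have he₀eq : h e₀ = (t₀ : EReal) := (EReal.coe_toReal he₀ (hne_bot e₀)).symm
  have hmem₀ : ∀ t : ℝ, t₀ ≤ t → (e₀, t) ∈ epi := by
    intro t ht
    simp only [hepi, Set.mem_setOf_eq, he₀eq]
    exact_mod_cast ht
  -- decomposition of functionals on E × ℝ
  have decomp : ∀ f : StrongDual ℝ (E × ℝ), ∀ e : E, ∀ t : ℝ,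
      f (e, t) = f (e, 0) + t * f (0, 1) := by
    intro f e t
    have he : (e, t) = (e, (0:ℝ)) + t • ((0:E), (1:ℝ)) := by
      simp [Prod.ext_iff]
    rw [he, map_add, map_smul, smul_eq_mul]
  -- vertical slope is nonpositive for separating functionals
  have slope : ∀ f : StrongDual ℝ (E × ℝ), ∀ u : ℝ, (∀ p ∈ epi, f p < u) →
      f ((0:E), (1:ℝ)) ≤ 0 := by
    intro f u hf
    by_contra hs
    push_neg at hs
    set s := f ((0:E), (1:ℝ)) with hsdef
    set t := max t₀ ((u - f (e₀, 0)) / s) with htdef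
    have h1 : f (e₀, t) < u := hf _ (hmem₀ t (le_max_left _ _))
    rw [decomp] at h1
    have h2 : (u - f (e₀, 0)) / s ≤ t := le_max_right _ _
    rw [div_le_iff₀ hs] at h2
    linarith
  -- auxiliary separation with strictly negative slope
  have hnot₀ : (e₀, t₀ - 1) ∉ epi := by
    simp only [hepi, Set.mem_setOf_eq, he₀eq, not_le]
    exact_mod_cast (by linarith : t₀ - 1 < t₀)
  obtain ⟨f₀, u₀, hf₀, hu₀⟩ := geometric_hahn_banach_closed_point hcv hcl hnot₀
  have hs₀ : f₀ ((0:E), (1:ℝ)) < 0 := by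
    rcases lt_or_eq_of_le (slope f₀ u₀ hf₀) with h' | h'
    · exact h'
    · exfalso
      have hA := hf₀ (e₀, t₀) (hmem₀ t₀ le_rfl)
      rw [decomp] at hA hu₀
      rw [← h'] at hA hu₀
      linarith
  -- main separation
  have hnotw : (w, r) ∉ epi := by
    simp only [hepi, Set.mem_setOf_eq, not_le]; exact hr
  obtain ⟨f, u, hf, hu⟩ := geometric_hahn_banach_closed_point hcv hcl hnotw
  have hs : f ((0:E), (1:ℝ)) ≤ 0 := slope f u hf
  -- unified construction of a strictly-sloped separating functional
  obtain ⟨G, U, hGneg, hGepi, hGw⟩ :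
      ∃ (G : StrongDual ℝ (E × ℝ)) (U : ℝ), G ((0:E), (1:ℝ)) < 0 ∧
        (∀ p ∈ epi, G p ≤ U) ∧ U < G (w, r) := by
    rcases lt_or_eq_of_le hs with hneg | hzero
    · exact ⟨f, u, hneg, fun p hp => (hf p hp).le, hu⟩
    · set A := u₀ - f₀ (w, r) with hAdef
      set δ := f (w, r) - u with hδdef
      have hδ : 0 < δ := by simp only [hδdef]; linarith
      set ε := δ / (2 * (|A| + 1)) with hεdef
      have hεpos : 0 < ε := by
        apply div_pos hδ
        positivity
      refine ⟨f + ε • f₀, u + ε * u₀, ?_, ?_, ?_⟩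
      · simp only [ContinuousLinearMap.add_apply, ContinuousLinearMap.coe_smul',
          Pi.smul_apply, smul_eq_mul, ← hzero]
        have := mul_neg_of_pos_of_neg hεpos hs₀
        linarith
      · intro p hp
        simp only [ContinuousLinearMap.add_apply, ContinuousLinearMap.coe_smul',
          Pi.smul_apply, smul_eq_mul]
        have h1 := hf p hp
        have h2 := mul_lt_mul_of_pos_left (hf₀ p hp) hεpos
        linarith
      · simp only [ContinuousLinearMap.add_apply, ContinuousLinearMap.coe_smul',
          Pi.smul_apply, smul_eq_mul]
        have habs : ε * A ≤ ε * |A| := mul_le_mul_of_nonneg_left (le_abs_self A) hεpos.le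
        have h0 : 0 ≤ ε * |A| := mul_nonneg hεpos.le (abs_nonneg A)
        have hε2 : ε * (2 * (|A| + 1)) = δ := by
          rw [hεdef]; field_simp
        have hAexp : ε * A = ε * u₀ - ε * f₀ (w, r) := by rw [hAdef]; ring
        have hδexp : δ = f (w, r) - u := hδdef
        nlinarith [habs, h0, hε2]
  -- build the conclusion
  set N := -(G ((0:E), (1:ℝ))) with hNdef
  have hN : 0 < N := by simp only [hNdef]; linarith
  set g : StrongDual ℝ E := G.comp (ContinuousLinearMap.inl ℝ E ℝ) with hgdef
  have hgapp : ∀ e : E, g e = G (e, 0) := by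
    intro e; simp [hgdef]
  refine ⟨N⁻¹ • g, U / N, ?_, ?_⟩
  · intro e t het
    have hmem : (e, t) ∈ epi := het
    have h1 := hGepi _ hmem
    rw [decomp] at h1
    have h2 : G (e, 0) - t * N ≤ U := by rw [hNdef]; linarith
    have := div_trick hN h2
    simpa [hgapp] using this
  · have h1 := hGw
    rw [decomp] at h1
    have h2 : U < G (w, 0) - r * N := by rw [hNdef]; linarith
    have := div_trick' hN h2
    simpa [hgapp] using this

theorem statement7 (X : Type*) [NormedAddCommGroup X] [NormedSpace ℝ X] [CompleteSpace X]
    (h : X × StrongDual ℝ X → EReal) (hne_bot : ∀ z, h z ≠ ⊥) (hne_top : ∃ z, h z ≠ ⊤)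
    (hlsc : LowerSemicontinuous h) (hconv : ErConvex h) (L : ℝ) (hL : 0 ≤ L)
    (hdom : Prod.fst '' edom (conj2 X h) ⊆ Metric.closedBall 0 L) :
    (∀ (x z : X) (xs : StrongDual ℝ X), h (x, xs) ≤ h (z, xs) + ((L * ‖x - z‖ : ℝ) : EReal)) ∧
    edom h = (Set.univ : Set X) ×ˢ (Prod.snd '' edom h) := by
  obtain ⟨e₀, he₀⟩ := hne_top
  have main : ∀ (x z : X) (xs : StrongDual ℝ X),
      h (x, xs) ≤ h (z, xs) + ((L * ‖x - z‖ : ℝ) : EReal) := by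
    intro x z xs
    by_cases hz : h (z, xs) = ⊤
    · rw [hz, EReal.top_add_coe]; exact le_top
    · set hzR := (h (z, xs)).toReal with hzRdef
      have hzeq : h (z, xs) = (hzR : EReal) := (EReal.coe_toReal hz (hne_bot _)).symm
      rw [hzeq, ← EReal.coe_add]
      apply ereal_le_coe_of_forall
      intro r hr
      obtain ⟨y, c, hsep, hwc⟩ := sep_lemma h hne_bot hlsc hconv he₀ (x, xs) r hr
      set y₁ : StrongDual ℝ X := y.comp (ContinuousLinearMap.inl ℝ X (StrongDual ℝ X)) with hy₁def
      set y₂ : StrongDual ℝ (StrongDual ℝ X) := y.comp (ContinuousLinearMap.inr ℝ X (StrongDual ℝ X)) with hy₂def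
      have hy : ∀ e : X × StrongDual ℝ X, y e = y₁ e.1 + y₂ e.2 := by
        rintro ⟨a, b⟩
        have : (a, b) = ((a, 0) : X × StrongDual ℝ X) + (0, b) := by simp
        rw [this, map_add]
        simp [hy₁def, hy₂def]
      have hconjle : conj2 X h (y₁, y₂) ≤ (c : EReal) := by
        apply iSup_le
        intro e
        by_cases he : h e = ⊤
        · rw [he, EReal.sub_top]; exact bot_le
        · have heq : h e = ((h e).toReal : EReal) := (EReal.coe_toReal he (hne_bot e)).symm
          rw [heq, ← EReal.coe_sub, EReal.coe_le_coe_iff]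
          have h1 := hsep e (h e).toReal (le_of_eq heq)
          rw [hy e] at h1
          linarith
      have hmem : (y₁, y₂) ∈ edom (conj2 X h) :=
        lt_of_le_of_lt hconjle (EReal.coe_lt_top c)
      have hy₁L : ‖y₁‖ ≤ L := by
        have := hdom (Set.mem_image_of_mem Prod.fst hmem)
        rwa [Metric.mem_closedBall, dist_zero_right] at this
      have h1 : y (z, xs) - hzR ≤ c := hsep (z, xs) hzR (le_of_eq hzeq)
      have h2 : c < y (x, xs) - r := hwc
      have h3 : y (x, xs) - y (z, xs) = y₁ (x - z) := by
        rw [hy, hy]; simp only [map_sub]; ring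
      have h4 : y₁ (x - z) ≤ L * ‖x - z‖ := by
        refine le_trans (le_trans (le_abs_self _) ?_)
          (mul_le_mul_of_nonneg_right hy₁L (norm_nonneg _))
        rw [← Real.norm_eq_abs]
        exact y₁.le_opNorm _
      linarith
  refine ⟨main, ?_⟩
  ext ⟨x, xs⟩
  constructor
  · intro hx
    exact ⟨Set.mem_univ x, ⟨(x, xs), hx, rfl⟩⟩
  · rintro ⟨-, ⟨⟨z, xs'⟩, hz, hxs⟩⟩
    simp only at hxs
    subst hxs
    have h1 := main x z xs'
    have h2 : h (z, xs') < ⊤ := hz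
    exact lt_of_le_of_lt h1 (EReal.add_lt_top h2.ne (EReal.coe_ne_top _))
end

section
/- Let h : X × X* → ℝ ∪ {+∞} be a proper, closed (norm-lower-semicontinuous) convex function and 0 ≤ L < ∞. If P₂(D(h*)) ⊆ B_{X**}[L], then h(x, x*) ≤ h(x, z*) + L‖x* − z*‖ for all x ∈ X and all x*, z* ∈ X*, and consequently D(h) = P₁(D(h)) × X*. -/
open NormedSpace Classical

section AuxSep

variable {E : Type*} [NormedAddCommGroup E] [NormedSpace ℝ E]

lemma EReal.exists_coe {e : EReal} (h1 : e ≠ ⊥) (h2 : e ≠ ⊤) : ∃ r : ℝ, e = ↑r := by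
  induction e using EReal.rec with
  | bot => simp at h1
  | coe r => exact ⟨r, rfl⟩
  | top => simp at h2

/-- the real epigraph -/
def repi (h : E → EReal) : Set (E × ℝ) := {q | h q.1 ≤ (q.2 : EReal)}

lemma repi_closed {h : E → EReal} (hlsc : LowerSemicontinuous h) : IsClosed (repi h) := by
  have h1 : IsClosed {p : E × EReal | h p.1 ≤ p.2} := hlsc.isClosed_epigraph
  have : repi h = (fun q : E × ℝ => (q.1, (q.2 : EReal))) ⁻¹' {p : E × EReal | h p.1 ≤ p.2} := rfl
  rw [this]
  exact h1.preimage (continuous_fst.prodMk (continuous_coe_real_ereal.comp continuous_snd))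

lemma repi_convex {h : E → EReal} (hbot : ∀ z, h z ≠ ⊥) (hconv : ErConvex h) :
    Convex ℝ (repi h) := by
  rintro ⟨x, r₁⟩ hx ⟨y, r₂⟩ hy a b ha hb hab
  simp only [repi, Set.mem_setOf_eq] at hx hy ⊢
  obtain ⟨ρ₁, hρ₁⟩ := EReal.exists_coe (hbot x) (fun ht => by simp [ht] at hx)
  obtain ⟨ρ₂, hρ₂⟩ := EReal.exists_coe (hbot y) (fun ht => by simp [ht] at hy)
  rw [hρ₁] at hx; rw [hρ₂] at hy
  rw [EReal.coe_le_coe_iff] at hx hy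
  have := hconv x y a b ha hb hab
  rw [hρ₁, hρ₂] at this
  refine this.trans ?_
  rw [← EReal.coe_mul, ← EReal.coe_mul, ← EReal.coe_add]
  show ((a * ρ₁ + b * ρ₂ : ℝ) : EReal) ≤ ((a • r₁ + b • r₂ : ℝ) : EReal)
  rw [EReal.coe_le_coe_iff, smul_eq_mul, smul_eq_mul]
  nlinarith

/-- separation step: separate a point outside the epigraph -/
lemma sep_step {h : E → EReal} (hbot : ∀ z, h z ≠ ⊥) {z₀ : E} (hz₀ : h z₀ ≠ ⊤)
    (hlsc : LowerSemicontinuous h) (hconv : ErConvex h) (z : E) (t : ℝ)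
    (hzt : (z, t) ∉ repi h) :
    ∃ (g : StrongDual ℝ E) (s u : ℝ), 0 ≤ s ∧ g z + s * t < u ∧
      ∀ w (r : ℝ), h w ≤ (r : EReal) → u < g w + s * r := by
  obtain ⟨f, u, hfz, hf⟩ := geometric_hahn_banach_point_closed
    (repi_convex hbot hconv) (repi_closed hlsc) hzt
  set g : StrongDual ℝ E := f.comp (ContinuousLinearMap.inl ℝ E ℝ) with hg
  set s : ℝ := f (0, 1) with hs
  have key : ∀ (w : E) (r : ℝ), f (w, r) = g w + s * r := by
    intro w r
    have : (w, r) = (w, (0:ℝ)) + ((0:E), r) := by simp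
    rw [this, map_add]
    congr 1
    have : ((0:E), r) = r • ((0:E), (1:ℝ)) := by simp
    rw [this, map_smul, smul_eq_mul, mul_comm]
  have hcond : ∀ (w : E) (r : ℝ), h w ≤ (r : EReal) → u < g w + s * r := by
    intro w r hr
    have := hf (w, r) hr
    rwa [key] at this
  refine ⟨g, s, u, ?_, by rw [← key]; exact hfz, hcond⟩
  by_contra hsneg
  push_neg at hsneg
  obtain ⟨ρ₀, hρ₀⟩ := EReal.exists_coe (hbot z₀) hz₀
  have h1 : h z₀ ≤ ((max ρ₀ ((u - g z₀) / s) + 1 : ℝ) : EReal) := by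
    rw [hρ₀, EReal.coe_le_coe_iff]
    have : ρ₀ ≤ max ρ₀ ((u - g z₀) / s) := le_max_left _ _
    linarith
  have h2 := hcond z₀ _ h1
  have h3 : (u - g z₀) / s ≤ max ρ₀ ((u - g z₀) / s) := le_max_right _ _
  have h4 : (u - g z₀) / s < max ρ₀ ((u - g z₀) / s) + 1 := by linarith
  have h5 := (div_lt_iff_of_neg hsneg).mp h4
  nlinarith

/-- from a separation with positive vertical coefficient, build an affine minorant -/
lemma from_pos {h : E → EReal} (hbot : ∀ z, h z ≠ ⊥) {g : StrongDual ℝ E} {s u : ℝ} (hs : 0 < s)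
    (hcond : ∀ w (r : ℝ), h w ≤ (r : EReal) → u < g w + s * r) :
    ∃ (p : StrongDual ℝ E) (α : ℝ), (∀ w, ((p w - α : ℝ) : EReal) ≤ h w) ∧
      (∀ w, p w - α = (u - g w) / s) := by
  refine ⟨(-(s⁻¹)) • g, -(u / s), ?_, ?_⟩
  · intro w
    rcases eq_or_ne (h w) ⊤ with htop | htop
    · rw [htop]; exact le_top
    obtain ⟨ρ, hρ⟩ := EReal.exists_coe (hbot w) htop
    have := hcond w ρ (le_of_eq hρ)
    rw [hρ, EReal.coe_le_coe_iff]
    show (-(s⁻¹)) • g w - -(u / s) ≤ ρ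
    have hs' : s ≠ 0 := ne_of_gt hs
    have e1 : (-(s⁻¹)) • g w - -(u / s) = (u - g w) / s := by
      rw [smul_eq_mul]; field_simp; ring
    rw [e1]
    exact ((div_lt_iff₀ hs).mpr (by linarith)).le
  · intro w
    show (-(s⁻¹)) • g w - -(u / s) = (u - g w) / s
    have hs' : s ≠ 0 := ne_of_gt hs
    rw [smul_eq_mul]
    field_simp
    ring

/-- every lsc proper convex EReal function has, below any value t < h z, a continuous affine
minorant exceeding t at z -/
lemma exists_affine_minorant {h : E → EReal} (hbot : ∀ z, h z ≠ ⊥) {z₀ : E} (hz₀ : h z₀ ≠ ⊤)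
    (hlsc : LowerSemicontinuous h) (hconv : ErConvex h) (z : E) (t : ℝ)
    (ht : (t : EReal) < h z) :
    ∃ (p : StrongDual ℝ E) (α : ℝ), (∀ w, ((p w - α : ℝ) : EReal) ≤ h w) ∧ t < p z - α := by
  have hzt : (z, t) ∉ repi h := fun hm => ht.not_ge hm
  obtain ⟨g, s, u, hs0, hpt, hcond⟩ := sep_step hbot hz₀ hlsc hconv z t hzt
  rcases hs0.lt_or_eq with hs | hs
  · obtain ⟨p, α, hmin, heq⟩ := from_pos hbot hs hcond
    refine ⟨p, α, hmin, ?_⟩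
    rw [heq z]
    exact (lt_div_iff₀ hs).mpr (by linarith)
  · -- s = 0
    have hgz : g z < u := by have := hpt; rw [← hs] at this; simpa using this
    have hgw : ∀ (w : E) (r : ℝ), h w ≤ (r : EReal) → u < g w := by
      intro w r hwr
      have := hcond w r hwr
      rw [← hs] at this; simpa using this
    obtain ⟨ρ₀, hρ₀⟩ := EReal.exists_coe (hbot z₀) hz₀
    have hzt₀ : (z₀, ρ₀ - 1) ∉ repi h := by
      intro hm
      have : h z₀ ≤ ((ρ₀ - 1 : ℝ) : EReal) := hm
      rw [hρ₀, EReal.coe_le_coe_iff] at this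
      linarith
    obtain ⟨g₀, s₀, u₀, hs₀0, hpt₀, hcond₀⟩ := sep_step hbot hz₀ hlsc hconv z₀ (ρ₀ - 1) hzt₀
    have hs₀pos : 0 < s₀ := by
      rcases hs₀0.lt_or_eq with h' | h'
      · exact h'
      · exfalso
        have a := hcond₀ z₀ ρ₀ (le_of_eq hρ₀)
        rw [← h'] at a hpt₀
        simp only [zero_mul, add_zero] at a hpt₀
        linarith
    obtain ⟨q, β, hqmin, hqeq⟩ := from_pos hbot hs₀pos hcond₀
    have hu : 0 < u - g z := by linarith
    set lam : ℝ := max 0 ((t - (q z - β) + 1) / (u - g z)) with hlam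
    have hlam0 : 0 ≤ lam := le_max_left _ _
    refine ⟨q - lam • g, β - lam * u, ?_, ?_⟩
    · intro w
      rcases eq_or_ne (h w) ⊤ with hw | hw
      · rw [hw]; exact le_top
      obtain ⟨ρ, hρ⟩ := EReal.exists_coe (hbot w) hw
      have hq := hqmin w
      rw [hρ, EReal.coe_le_coe_iff] at hq ⊢
      have hgww := hgw w ρ (le_of_eq hρ)
      have happ : (q - lam • g) w = q w - lam * g w := by
        simp [ContinuousLinearMap.sub_apply, ContinuousLinearMap.smul_apply, smul_eq_mul]
      rw [happ]
      nlinarith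
    · have happ : (q - lam • g) z = q z - lam * g z := by
        simp [ContinuousLinearMap.sub_apply, ContinuousLinearMap.smul_apply, smul_eq_mul]
      rw [happ]
      have h6 : (t - (q z - β) + 1) / (u - g z) ≤ lam := le_max_right _ _
      have h7 : t - (q z - β) + 1 ≤ lam * (u - g z) := by
        rw [div_le_iff₀ hu] at h6
        linarith
      nlinarith

end AuxSep


theorem statement8 (X : Type*) [NormedAddCommGroup X] [NormedSpace ℝ X] [CompleteSpace X]
    (h : X × StrongDual ℝ X → EReal) (hne_bot : ∀ z, h z ≠ ⊥) (hne_top : ∃ z, h z ≠ ⊤)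
    (hlsc : LowerSemicontinuous h) (hconv : ErConvex h) (L : ℝ) (hL : 0 ≤ L)
    (hdom : Prod.snd '' edom (conj2 X h) ⊆ Metric.closedBall 0 L) :
    (∀ (x : X) (xs zs : StrongDual ℝ X), h (x, xs) ≤ h (x, zs) + ((L * ‖xs - zs‖ : ℝ) : EReal)) ∧
    edom h = (Prod.fst '' edom h) ×ˢ (Set.univ : Set (StrongDual ℝ X)) := by
  have key : ∀ (x : X) (xs zs : StrongDual ℝ X),
      h (x, xs) ≤ h (x, zs) + ((L * ‖xs - zs‖ : ℝ) : EReal) := by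
    intro x xs zs
    rcases eq_or_ne (h (x, zs)) ⊤ with htop | htop
    · rw [htop]
      rw [EReal.top_add_coe]; exact le_top
    obtain ⟨r, hr⟩ := EReal.exists_coe (hne_bot _) htop
    rw [hr, ← EReal.coe_add]
    by_contra hc
    push_neg at hc
    obtain ⟨z₀, hz₀⟩ := hne_top
    obtain ⟨p, α, hmin, hpt⟩ := exists_affine_minorant hne_bot hz₀ hlsc hconv (x, xs) _ hc
    set y₁ : StrongDual ℝ X := p.comp (ContinuousLinearMap.inl ℝ X (StrongDual ℝ X)) with hy₁def
    set y₂ : StrongDual ℝ (StrongDual ℝ X) := p.comp (ContinuousLinearMap.inr ℝ X (StrongDual ℝ X)) with hy₂def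
    have hdecomp : ∀ (a : X) (b : StrongDual ℝ X), p (a, b) = y₁ a + y₂ b := by
      intro a b
      have : (a, b) = (a, (0 : StrongDual ℝ X)) + ((0 : X), b) := by simp
      rw [this, map_add]; rfl
    have hconj : conj2 X h (y₁, y₂) ≤ (α : EReal) := by
      apply iSup_le
      intro w
      have hpw : p (w.1, w.2) = y₁ w.1 + y₂ w.2 := hdecomp w.1 w.2
      rcases eq_or_ne (h w) ⊤ with hw | hw
      · rw [hw]
        have : ((y₁ w.1 + y₂ w.2 : ℝ) : EReal) - ⊤ = ⊥ := by simp
        rw [this]; exact bot_le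
      · obtain ⟨ρ, hρ⟩ := EReal.exists_coe (hne_bot w) hw
        have hm := hmin w
        rw [hρ, EReal.coe_le_coe_iff] at hm
        rw [hρ, ← EReal.coe_sub, EReal.coe_le_coe_iff]
        have : p w = y₁ w.1 + y₂ w.2 := hpw
        linarith
    have hy₂dom : y₂ ∈ Prod.snd '' edom (conj2 X h) :=
      ⟨(y₁, y₂), lt_of_le_of_lt hconj (EReal.coe_lt_top α), rfl⟩
    have hy₂ : ‖y₂‖ ≤ L := by
      have := hdom hy₂dom
      rw [Metric.mem_closedBall] at this; exact (dist_zero_right y₂).symm.trans_le this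
    have h1 := hmin (x, zs)
    rw [hr, EReal.coe_le_coe_iff] at h1
    rw [hdecomp x zs] at h1
    rw [hdecomp x xs] at hpt
    have h4 : y₂ (xs - zs) ≤ ‖y₂‖ * ‖xs - zs‖ :=
      (le_abs_self _).trans (by rw [← Real.norm_eq_abs]; exact y₂.le_opNorm _)
    rw [map_sub] at h4
    have h5 : ‖y₂‖ * ‖xs - zs‖ ≤ L * ‖xs - zs‖ :=
      mul_le_mul_of_nonneg_right hy₂ (norm_nonneg _)
    linarith
  refine ⟨key, ?_⟩
  ext z
  obtain ⟨x, xs⟩ := z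
  simp only [Set.mem_prod, Set.mem_univ, and_true]
  constructor
  · intro hx
    exact ⟨(x, xs), hx, rfl⟩
  · rintro ⟨⟨w1, w2⟩, hw, rfl⟩
    have hlt : h (w1, w2) < ⊤ := hw
    obtain ⟨ρ, hρ⟩ := EReal.exists_coe (hne_bot _) (ne_of_lt hlt)
    show h (w1, xs) < ⊤
    calc h (w1, xs) ≤ h (w1, w2) + ((L * ‖xs - w2‖ : ℝ) : EReal) := key w1 xs w2
      _ = ((ρ + L * ‖xs - w2‖ : ℝ) : EReal) := by rw [hρ, ← EReal.coe_add]
      _ < ⊤ := EReal.coe_lt_top _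
end

section
/- Let h : X × X* → ℝ ∪ {+∞} be a proper, closed (norm-lower-semicontinuous) convex function with h(x,x*) ≥ ⟨x,x*⟩ for all (x,x*), and suppose P₁(D(h*)) ⊆ B_{X*}[L] for some 0 ≤ L < ∞. Then: (1) for each x* ∈ P₂(D(h)), the function x ↦ h(x, x*) is real-valued and L-Lipschitz continuous on X; (2) D(h) = X × P₂(D(h)) ⊆ X × B_{X*}[L]; (3) P₂(D(h)) ⊆ B_{X*}[L] and P₁(D(h)) = X. -/
open NormedSpace Classical

section helpers

open NormedSpace Classical Metric Filter

variable {X : Type*} [NormedAddCommGroup X] [NormedSpace ℝ X]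

private lemma conjBound (h : X × StrongDual ℝ X → EReal) (hne_bot : ∀ z, h z ≠ ⊥)
    (ys : StrongDual ℝ X) (yss : StrongDual ℝ (StrongDual ℝ X)) (M : ℝ)
    (hb : ∀ z : X × StrongDual ℝ X, h z ≠ ⊤ → ys z.1 + yss z.2 ≤ M + (h z).toReal) :
    conj2 X h (ys, yss) ≤ (M : EReal) := by
  refine iSup_le fun z => ?_
  by_cases hz : h z = ⊤
  · rw [hz, EReal.sub_top]; exact bot_le
  · have hzz : h z = ((h z).toReal : EReal) := (EReal.coe_toReal hz (hne_bot z)).symm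
    rw [hzz, ← EReal.coe_sub]
    exact EReal.coe_le_coe_iff.2 (by linarith [hb z hz])

private lemma sepLem (h : X × StrongDual ℝ X → EReal)
    (hlsc : LowerSemicontinuous h) (hconv : ErConvex h)
    (z₀ : X × StrongDual ℝ X) (t₀ : ℝ) (hz₀ : h z₀ ≤ (t₀ : EReal))
    (z₁ : X × StrongDual ℝ X) (r : ℝ) (hr : (r : EReal) < h z₁) :
    ∃ (a : StrongDual ℝ X) (b : StrongDual ℝ (StrongDual ℝ X)) (s u : ℝ), 0 ≤ s ∧
      a z₁.1 + b z₁.2 + r * s < u ∧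
      ∀ (z : X × StrongDual ℝ X) (t : ℝ), h z ≤ (t : EReal) → u < a z.1 + b z.2 + t * s := by
  set epi : Set ((X × StrongDual ℝ X) × ℝ) := {p | h p.1 ≤ (p.2 : EReal)} with hepi_def
  have hclosed : IsClosed epi := by
    have h1 : IsClosed {p : (X × StrongDual ℝ X) × EReal | h p.1 ≤ p.2} := hlsc.isClosed_epigraph
    have h2 : Continuous fun p : (X × StrongDual ℝ X) × ℝ => (p.1, (p.2 : EReal)) :=
      continuous_fst.prodMk (continuous_coe_real_ereal.comp continuous_snd)
    exact h1.preimage h2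
  have hconvex : Convex ℝ epi := by
    rintro p hp q hq a b ha hb hab
    simp only [hepi_def, Set.mem_setOf_eq] at *
    show h (a • p.1 + b • q.1) ≤ ((a • p.2 + b • q.2 : ℝ) : EReal)
    calc h (a • p.1 + b • q.1) ≤ (a : EReal) * h p.1 + (b : EReal) * h q.1 :=
          hconv _ _ a b ha hb hab
      _ ≤ (a : EReal) * (p.2 : EReal) + (b : EReal) * (q.2 : EReal) := by
          exact add_le_add (mul_le_mul_of_nonneg_left hp (by exact_mod_cast ha))
            (mul_le_mul_of_nonneg_left hq (by exact_mod_cast hb))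
      _ = ((a • p.2 + b • q.2 : ℝ) : EReal) := by
          simp [smul_eq_mul]
  have hnot : (z₁, r) ∉ epi := fun hcon => absurd hcon (not_le.2 hr)
  obtain ⟨f, u, hfu, hset⟩ := geometric_hahn_banach_point_closed hconvex hclosed hnot
  set a : StrongDual ℝ X := f.comp ((ContinuousLinearMap.inl ℝ (X × StrongDual ℝ X) ℝ).comp
      (ContinuousLinearMap.inl ℝ X (StrongDual ℝ X))) with ha_def
  set b : StrongDual ℝ (StrongDual ℝ X) := f.comp ((ContinuousLinearMap.inl ℝ (X × StrongDual ℝ X) ℝ).comp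
      (ContinuousLinearMap.inr ℝ X (StrongDual ℝ X))) with hb_def
  set s : ℝ := f (((0 : X), (0 : StrongDual ℝ X)), (1 : ℝ)) with hs_def
  have hdec : ∀ (z : X × StrongDual ℝ X) (t : ℝ), f (z, t) = a z.1 + b z.2 + t * s := by
    intro z t
    have he : (z, t) = (((z.1, 0) : X × StrongDual ℝ X), (0 : ℝ))
        + ((((0 : X), z.2) : X × StrongDual ℝ X), (0 : ℝ))
        + t • ((((0 : X), (0 : StrongDual ℝ X)) : X × StrongDual ℝ X), (1 : ℝ)) := by
      simp [Prod.ext_iff]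
    rw [he, map_add, map_add, map_smul, smul_eq_mul]
    simp [ha_def, hb_def, hs_def]
  have hset' : ∀ (z : X × StrongDual ℝ X) (t : ℝ), h z ≤ (t : EReal) →
      u < a z.1 + b z.2 + t * s := by
    intro z t hzt
    have := hset (z, t) hzt
    rwa [hdec] at this
  have hs_nonneg : 0 ≤ s := by
    by_contra hneg
    push_neg at hneg
    set A := a z₀.1 + b z₀.2 with hA
    have base : u < A + t₀ * s := hset' z₀ t₀ hz₀
    set t' := t₀ + (u - (A + t₀ * s)) / s with ht'def
    have ht' : t₀ ≤ t' := by
      have h0 : 0 ≤ (u - (A + t₀ * s)) / s :=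
        div_nonneg_iff.2 (Or.inr ⟨by linarith, hneg.le⟩)
      rw [ht'def]; linarith
    have hmem : u < A + t' * s := hset' z₀ t' (hz₀.trans (EReal.coe_le_coe_iff.2 ht'))
    have hkey : t' * s = t₀ * s + (u - (A + t₀ * s)) := by
      rw [ht'def, add_mul, div_mul_cancel₀ _ hneg.ne]
    rw [hkey] at hmem
    linarith
  have hpt : a z₁.1 + b z₁.2 + r * s < u := by rw [← hdec]; exact hfu
  exact ⟨a, b, s, u, hs_nonneg, hpt, hset'⟩

private lemma normBound (h : X × StrongDual ℝ X → EReal) (L : ℝ)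
    (hdom : Prod.fst '' edom (conj2 X h) ⊆ Metric.closedBall 0 L)
    (ys : StrongDual ℝ X) (yss : StrongDual ℝ (StrongDual ℝ X)) (M : ℝ)
    (hle : conj2 X h (ys, yss) ≤ (M : EReal)) : ‖ys‖ ≤ L := by
  have hmem : (ys, yss) ∈ edom (conj2 X h) :=
    lt_of_le_of_lt hle (EReal.coe_lt_top M)
  have := hdom ⟨(ys, yss), hmem, rfl⟩
  simpa [Metric.mem_closedBall, dist_zero_right] using this

private lemma keyLem (h : X × StrongDual ℝ X → EReal) (hne_bot : ∀ z, h z ≠ ⊥)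
    (hlsc : LowerSemicontinuous h) (hconv : ErConvex h) (L : ℝ) (hL : 0 ≤ L)
    (hdom : Prod.fst '' edom (conj2 X h) ⊆ Metric.closedBall 0 L)
    (xs : StrongDual ℝ X) (x₀ x₁ : X) (h₀ : h (x₀, xs) ≠ ⊤) :
    h (x₁, xs) ≤ (((h (x₀, xs)).toReal + L * ‖x₁ - x₀‖ : ℝ) : EReal) := by
  set c := (h (x₀, xs)).toReal with hc_def
  have hc : h (x₀, xs) = (c : EReal) := (EReal.coe_toReal h₀ (hne_bot _)).symm
  by_contra hcon
  push_neg at hcon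
  obtain ⟨a, b, s, u, hs, hpt, hepi⟩ :=
    sepLem h hlsc hconv (x₀, xs) c hc.le (x₁, xs) (c + L * ‖x₁ - x₀‖) hcon
  have hbase : u < a x₀ + b xs + c * s := hepi (x₀, xs) c hc.le
  rcases eq_or_lt_of_le hs with hs0 | hspos
  · -- s = 0
    have hr0 : ((c - 1 : ℝ) : EReal) < h (x₀, xs) := by
      rw [hc]; exact_mod_cast sub_one_lt c
    obtain ⟨a₀, b₀, s₀, u₀, hs₀, hpt₀, hepi₀⟩ :=
      sepLem h hlsc hconv (x₀, xs) c hc.le (x₀, xs) (c - 1) hr0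
    have hs₀pos : 0 < s₀ := by
      rcases eq_or_lt_of_le hs₀ with h0 | hlt
      · exfalso
        have h1 := hepi₀ (x₀, xs) c hc.le
        rw [← h0] at hpt₀ h1
        simp only [mul_zero, add_zero] at hpt₀ h1
        linarith
      · exact hlt
    have hbnd : ∀ t : ℝ, 0 ≤ t → ‖(-s₀⁻¹) • a₀ - t • a‖ ≤ L := by
      intro t ht
      apply normBound h L hdom _ ((-s₀⁻¹) • b₀ - t • b) (-(u₀ / s₀) - t * u)
      apply conjBound h hne_bot
      intro z hz
      have hzz : h z = (((h z).toReal : ℝ) : EReal) :=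
        (EReal.coe_toReal hz (hne_bot z)).symm
      have h1 : u₀ < a₀ z.1 + b₀ z.2 + (h z).toReal * s₀ := hepi₀ z (h z).toReal hzz.le
      have h2 : u < a z.1 + b z.2 + (h z).toReal * s := hepi z (h z).toReal hzz.le
      rw [← hs0, mul_zero, add_zero] at h2
      simp only [ContinuousLinearMap.sub_apply, ContinuousLinearMap.smul_apply, smul_eq_mul]
      have e1 : -s₀⁻¹ * (a₀ z.1 + b₀ z.2) ≤ -(u₀ / s₀) + (h z).toReal := by
        have h3 : (u₀ - (a₀ z.1 + b₀ z.2)) / s₀ < (h z).toReal :=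
          (div_lt_iff₀ hs₀pos).2 (by linarith)
        have h4 : (u₀ - (a₀ z.1 + b₀ z.2)) / s₀
            = u₀ / s₀ - s₀⁻¹ * (a₀ z.1 + b₀ z.2) := by
          rw [div_eq_mul_inv, div_eq_mul_inv]; ring
        rw [h4] at h3
        linarith
      have e2 : t * u ≤ t * (a z.1 + b z.2) := mul_le_mul_of_nonneg_left h2.le ht
      linarith
    have ha0 : a = 0 := by
      have hnorm : ∀ t : ℝ, 0 < t → ‖a‖ ≤ (L + ‖(-s₀⁻¹) • a₀‖) / t := by
        intro t ht
        have h1 : ‖t • a‖ ≤ L + ‖(-s₀⁻¹) • a₀‖ := by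
          have he : ‖t • a‖ = ‖(-s₀⁻¹) • a₀ - ((-s₀⁻¹) • a₀ - t • a)‖ := by
            rw [sub_sub_cancel]
          rw [he]
          calc ‖(-s₀⁻¹) • a₀ - ((-s₀⁻¹) • a₀ - t • a)‖
              ≤ ‖(-s₀⁻¹) • a₀‖ + ‖(-s₀⁻¹) • a₀ - t • a‖ := norm_sub_le _ _
            _ ≤ ‖(-s₀⁻¹) • a₀‖ + L := add_le_add_right (hbnd t ht.le) _
            _ = L + ‖(-s₀⁻¹) • a₀‖ := add_comm _ _
        rw [norm_smul, Real.norm_eq_abs, abs_of_pos ht] at h1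
        rw [le_div_iff₀ ht]
        linarith [h1]
      have hC : 0 ≤ L + ‖(-s₀⁻¹) • a₀‖ := add_nonneg hL (norm_nonneg _)
      have hle0 : ‖a‖ ≤ 0 := by
        have htend : Filter.Tendsto (fun t : ℝ => (L + ‖(-s₀⁻¹) • a₀‖) / t)
            Filter.atTop (nhds 0) := tendsto_const_nhds.div_atTop Filter.tendsto_id
        refine ge_of_tendsto htend ?_
        filter_upwards [Filter.eventually_gt_atTop 0] with t ht using hnorm t ht
      exact norm_le_zero_iff.1 hle0
    have hax : a x₁ < a x₀ := by
      rw [← hs0, mul_zero, add_zero] at hpt hbase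
      simp only at hpt hbase
      linarith
    rw [ha0] at hax
    simp at hax
  · -- s > 0
    have hbnd : ‖(-s⁻¹) • a‖ ≤ L := by
      apply normBound h L hdom _ ((-s⁻¹) • b) (-(u / s))
      apply conjBound h hne_bot
      intro z hz
      have hzz : h z = (((h z).toReal : ℝ) : EReal) :=
        (EReal.coe_toReal hz (hne_bot z)).symm
      have h1 : u < a z.1 + b z.2 + (h z).toReal * s := hepi z (h z).toReal hzz.le
      simp only [ContinuousLinearMap.smul_apply, smul_eq_mul]
      have e1 : -s⁻¹ * (a z.1 + b z.2) ≤ -(u / s) + (h z).toReal := by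
        have h3 : (u - (a z.1 + b z.2)) / s < (h z).toReal :=
          (div_lt_iff₀ hspos).2 (by linarith)
        have h4 : (u - (a z.1 + b z.2)) / s = u / s - s⁻¹ * (a z.1 + b z.2) := by
          rw [div_eq_mul_inv, div_eq_mul_inv]; ring
        rw [h4] at h3
        linarith
      linarith
    have hup : ((-s⁻¹) • a) (x₁ - x₀) ≤ L * ‖x₁ - x₀‖ := by
      calc ((-s⁻¹) • a) (x₁ - x₀) ≤ ‖((-s⁻¹) • a) (x₁ - x₀)‖ := le_abs_self _
        _ ≤ ‖(-s⁻¹) • a‖ * ‖x₁ - x₀‖ := ContinuousLinearMap.le_opNorm _ _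
        _ ≤ L * ‖x₁ - x₀‖ := mul_le_mul_of_nonneg_right hbnd (norm_nonneg _)
    have hlo : L * ‖x₁ - x₀‖ < ((-s⁻¹) • a) (x₁ - x₀) := by
      simp only [ContinuousLinearMap.smul_apply, map_sub, smul_eq_mul]
      simp only at hpt
      have h5 : L * ‖x₁ - x₀‖ < (a x₀ - a x₁) / s :=
        (lt_div_iff₀ hspos).2 (by nlinarith)
      have h6 : (a x₀ - a x₁) / s = -s⁻¹ * (a x₁ - a x₀) := by
        rw [div_eq_mul_inv]; ring
      rw [h6] at h5
      linarith
    linarith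



end helpers

theorem statement10 (X : Type*) [NormedAddCommGroup X] [NormedSpace ℝ X] [CompleteSpace X]
    (h : X × StrongDual ℝ X → EReal) (hne_bot : ∀ z, h z ≠ ⊥) (hne_top : ∃ z, h z ≠ ⊤)
    (hlsc : LowerSemicontinuous h) (hconv : ErConvex h) (L : ℝ) (hL : 0 ≤ L)
    (hge : ∀ z, pairE X z ≤ h z)
    (hdom : Prod.fst '' edom (conj2 X h) ⊆ Metric.closedBall 0 L) :
    (∀ xs ∈ Prod.snd '' edom h,
       (∀ x : X, h (x, xs) ≠ ⊤ ∧ h (x, xs) ≠ ⊥) ∧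
       ∀ x z : X, |(h (x, xs)).toReal - (h (z, xs)).toReal| ≤ L * ‖x - z‖) ∧
    (edom h = (Set.univ : Set X) ×ˢ (Prod.snd '' edom h) ∧
     Prod.snd '' edom h ⊆ Metric.closedBall 0 L) ∧
    (Prod.snd '' edom h ⊆ Metric.closedBall 0 L ∧
     Prod.fst '' edom h = (Set.univ : Set X)) := by
  have key' : ∀ (xs : StrongDual ℝ X) (x₀ x₁ : X), h (x₀, xs) ≠ ⊤ →
      h (x₁, xs) ≤ (((h (x₀, xs)).toReal + L * ‖x₁ - x₀‖ : ℝ) : EReal) :=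
    fun xs x₀ x₁ h₀ => keyLem h hne_bot hlsc hconv L hL hdom xs x₀ x₁ h₀
  have hfin : ∀ xs ∈ Prod.snd '' edom h, ∀ x : X, h (x, xs) ≠ ⊤ := by
    rintro xs ⟨z, hz, rfl⟩ x
    have hz' : h z < ⊤ := hz
    have hzne : h (z.1, z.2) ≠ ⊤ := by rw [Prod.mk.eta]; exact hz'.ne
    exact (lt_of_le_of_lt (key' z.2 z.1 x hzne) (EReal.coe_lt_top _)).ne
  have hlip : ∀ xs ∈ Prod.snd '' edom h, ∀ x y : X,
      (h (x, xs)).toReal ≤ (h (y, xs)).toReal + L * ‖x - y‖ := by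
    intro xs hxs x y
    have hx := hfin xs hxs x
    have hy := hfin xs hxs y
    have h2 := key' xs y x hy
    rw [← EReal.coe_toReal hx (hne_bot _)] at h2
    exact EReal.coe_le_coe_iff.1 h2
  have hball : Prod.snd '' edom h ⊆ Metric.closedBall 0 L := by
    rintro xs ⟨z, hz, rfl⟩
    have hz' : h z < ⊤ := hz
    have hzne : h (z.1, z.2) ≠ ⊤ := by rw [Prod.mk.eta]; exact hz'.ne
    set c := (h (z.1, z.2)).toReal with hc_def
    have hb : ∀ x : X, z.2 x ≤ c + L * ‖x - z.1‖ := by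
      intro x
      have h1 : ((z.2 x : ℝ) : EReal) ≤ h (x, z.2) := hge (x, z.2)
      have h2 := key' z.2 z.1 x hzne
      exact EReal.coe_le_coe_iff.1 (h1.trans h2)
    have hlin : ∀ x : X, z.2 x ≤ L * ‖x‖ := by
      intro x
      have h2 : ∀ t : ℝ, 0 < t → z.2 x - L * ‖x‖ ≤ (c + L * ‖z.1‖) / t := by
        intro t ht
        have h3 := hb (t • x)
        rw [map_smul, smul_eq_mul] at h3
        have h4 : ‖t • x - z.1‖ ≤ t * ‖x‖ + ‖z.1‖ := by
          calc ‖t • x - z.1‖ ≤ ‖t • x‖ + ‖z.1‖ := norm_sub_le _ _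
            _ = t * ‖x‖ + ‖z.1‖ := by rw [norm_smul, Real.norm_eq_abs, abs_of_pos ht]
        rw [le_div_iff₀ ht]
        nlinarith [mul_le_mul_of_nonneg_left h4 hL]
      have htend : Filter.Tendsto (fun t : ℝ => (c + L * ‖z.1‖) / t)
          Filter.atTop (nhds 0) := tendsto_const_nhds.div_atTop Filter.tendsto_id
      have h5 := ge_of_tendsto htend
        (by filter_upwards [Filter.eventually_gt_atTop 0] with t ht using h2 t ht)
      linarith
    have hnorm : ‖z.2‖ ≤ L := by
      refine ContinuousLinearMap.opNorm_le_bound _ hL fun x => ?_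
      rw [Real.norm_eq_abs]
      refine abs_le.2 ⟨?_, by simpa using hlin x⟩
      have h6 := hlin (-x)
      rw [map_neg] at h6
      simp only [norm_neg] at h6
      linarith
    simpa [Metric.mem_closedBall, dist_zero_right] using hnorm
  refine ⟨?_, ⟨?_, hball⟩, hball, ?_⟩
  · intro xs hxs
    refine ⟨fun x => ⟨hfin xs hxs x, hne_bot _⟩, fun x y => ?_⟩
    refine abs_le.2 ⟨?_, ?_⟩
    · have := hlip xs hxs y x
      rw [norm_sub_rev] at this
      linarith
    · have := hlip xs hxs x y
      linarith
  · ext z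
    constructor
    · intro hz
      exact ⟨trivial, ⟨z, hz, rfl⟩⟩
    · rintro ⟨-, hz2⟩
      have h1 := hfin z.2 hz2 z.1
      rw [Prod.mk.eta] at h1
      exact lt_top_iff_ne_top.2 h1
  · obtain ⟨z₀, hz₀⟩ := hne_top
    apply Set.eq_univ_of_forall
    intro x
    have h1 : h (z₀.1, z₀.2) ≠ ⊤ := by rwa [Prod.mk.eta]
    exact ⟨(x, z₀.2), lt_of_le_of_lt (key' z₀.2 z₀.1 x h1) (EReal.coe_lt_top _), rfl⟩
end

section
/- Let T : X ⇉ X* be a maximal monotone operator. For every h in the Fitzpatrick family F_T, the norm closure of P₁(D(h)) equals the norm closure of the convex hull of D(T), and the weak-* closure of P₂(D(h)) equals the weak-* closure of the convex hull of R(T). -/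
open NormedSpace Classical

noncomputable section AuxProofs

open NormedSpace Set

variable {X : Type*} [NormedAddCommGroup X] [NormedSpace ℝ X]

/-- Every continuous linear functional on the weak-* dual is evaluation at a point. -/
lemma weakdual_repr (f : WeakDual ℝ X →L[ℝ] ℝ) :
    ∃ x : X, ∀ φ : StrongDual ℝ X, f (StrongDual.toWeakDual φ) = φ x := by
  set B := topDualPairing ℝ X with hB
  have hb := LinearMap.hasBasis_weakBilin B
  have hU : f ⁻¹' (Set.Ioo (-1 : ℝ) 1) ∈ nhds (0 : WeakDual ℝ X) := by
    refine (isOpen_Ioo.preimage f.continuous).mem_nhds ?_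
    simp [Set.mem_Ioo]
  replace hU := hb.mem_iff.mp hU
  obtain ⟨U, hUb, hUsub⟩ := hU
  obtain ⟨s, r, hr, rfl⟩ := B.toSeminormFamily.basisSets_iff.mp hUb
  have hker : ∀ φ : WeakDual ℝ X, (∀ x ∈ s, φ x = 0) → f φ = 0 := by
    intro φ hφ
    by_contra hne
    have hball : ∀ c : ℝ, (c • φ) ∈ Seminorm.ball (s.sup B.toSeminormFamily) 0 r := by
      intro c
      refine (Seminorm.mem_ball_zero _).mpr ?_
      refine Seminorm.finset_sup_apply_lt hr ?_
      intro i hi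
      change ‖(B (c • (φ : StrongDual ℝ X))) i‖ < r
      show ‖(topDualPairing ℝ X (c • (φ : StrongDual ℝ X))) i‖ < r
      change ‖c * ((φ : StrongDual ℝ X) i)‖ < r
      have h1 : (c • (φ : StrongDual ℝ X)) i = c * ((φ : StrongDual ℝ X) i) := rfl
      have h0 : (φ : StrongDual ℝ X) i = 0 := hφ i hi
      rw [h0, mul_zero, norm_zero]
      exact hr
    have h1 : f ((1 / f φ) • φ) ∈ Set.Ioo (-1 : ℝ) 1 := hUsub (hball _)
    rw [map_smul] at h1
    simp only [smul_eq_mul] at h1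
    rw [one_div, inv_mul_cancel₀ hne] at h1
    exact (lt_irrefl (1:ℝ)) h1.2
  let L : s → (StrongDual ℝ X →ₗ[ℝ] ℝ) := fun i => B.flip (i : X)
  let K : StrongDual ℝ X →ₗ[ℝ] ℝ := (f : WeakDual ℝ X →ₗ[ℝ] ℝ)
  have hsub : (⨅ i, LinearMap.ker (L i)) ≤ LinearMap.ker K := by
    intro φ hφ
    simp only [Submodule.mem_iInf, LinearMap.mem_ker] at hφ ⊢
    refine hker φ ?_
    intro x hx
    have := hφ ⟨x, hx⟩
    exact this
  have hspan := mem_span_of_iInf_ker_le_ker hsub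
  have := Fintype.ofFinite s
  obtain ⟨c, hc⟩ := (Submodule.mem_span_range_iff_exists_fun ℝ).1 hspan
  refine ⟨∑ i, c i • (i : X), ?_⟩
  intro φ
  have hKφ : K φ = f (StrongDual.toWeakDual φ) := rfl
  rw [← hKφ, ← hc]
  simp only [LinearMap.coe_sum, Finset.sum_apply, LinearMap.smul_apply, smul_eq_mul,
    map_sum, map_smul, L, hB, topDualPairing_apply]
  rfl

/-- Maximality: a point monotonically related to T belongs to T. -/
lemma maxmono_aux {T : Set (X × StrongDual ℝ X)} (hT : MaxMonotone X T) {z : X × StrongDual ℝ X}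
    (hz : z ∉ T) : ∃ w ∈ T, (z.2 - w.2) (z.1 - w.1) < 0 := by
  by_contra hno
  push_neg at hno
  have hmono : MonotoneSet X (insert z T) := by
    intro p hp q hq
    rw [Set.mem_insert_iff] at hp hq
    rcases hp with hp | hp <;> rcases hq with hq | hq
    · rw [hp, hq]; simp
    · rw [hp]; exact hno q hq
    · rw [hq]
      have h1 := hno p hp
      have e : (p.2 - z.2) (p.1 - z.1) = (z.2 - p.2) (z.1 - p.1) := by
        simp only [ContinuousLinearMap.sub_apply, map_sub]
        ring
      rw [e]
      exact h1
    · exact hT.1 p hp q hq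
  have heq := hT.2 _ hmono (Set.subset_insert z T)
  exact hz (heq ▸ Set.mem_insert z T)

/-- On the effective domain, members of the Fitzpatrick family take finite values
dominating the duality pairing. -/
lemma fitz_fin {T : Set (X × StrongDual ℝ X)} {h : X × StrongDual ℝ X → EReal}
    (hh : h ∈ FitzFamily X T) {z : X × StrongDual ℝ X} (hz : z ∈ edom h) :
    ∃ r : ℝ, h z = (r : EReal) ∧ z.2 z.1 ≤ r := by
  obtain ⟨-, -, hp, -⟩ := hh
  have h1 : ((z.2 z.1 : ℝ) : EReal) ≤ h z := hp z
  have h2 : h z ≠ ⊤ := (hz : h z < ⊤).ne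
  have h3 : h z ≠ ⊥ := by
    intro e
    rw [e] at h1
    exact absurd h1 (by simp)
  refine ⟨(h z).toReal, (EReal.coe_toReal h2 h3).symm, ?_⟩
  rw [← EReal.coe_toReal h2 h3] at h1
  exact_mod_cast h1

/-- Key inequality: members of the Fitzpatrick family dominate the Fitzpatrick function. -/
lemma fitz_key {T : Set (X × StrongDual ℝ X)} {h : X × StrongDual ℝ X → EReal}
    (hh : h ∈ FitzFamily X T) {z w : X × StrongDual ℝ X} {r : ℝ}
    (hzr : h z = (r : EReal)) (hw : w ∈ T) :
    z.2 w.1 + w.2 z.1 - w.2 w.1 ≤ r := by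
  obtain ⟨hcvx, -, hp, he⟩ := hh
  obtain ⟨x, x'⟩ := z
  obtain ⟨y, y'⟩ := w
  simp only at hzr ⊢
  have step : ∀ t ∈ Set.Ioo (0:ℝ) 1,
      (x' y + y' x - y' y) + t * (x' x - x' y - y' x + y' y) ≤ r := by
    intro t ht
    obtain ⟨ht0, ht1⟩ := ht
    have hcv := hcvx (x, x') (y, y') t (1 - t) ht0.le (by linarith) (by ring)
    have hple := (hp (t • (x,x') + (1-t) • (y,y'))).trans hcv
    rw [hzr, he _ hw] at hple
    have hrhs : ((t : EReal) * (r:EReal) + ((1-t : ℝ) : EReal) * pairE X (y,y'))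
        = (((t*r + (1-t)*(y' y)) : ℝ) : EReal) := by
      show ((t:EReal) * (r:EReal) + ((1-t:ℝ):EReal) * ((y' y : ℝ):EReal)) = _
      rw [← EReal.coe_mul, ← EReal.coe_mul, ← EReal.coe_add]
    rw [hrhs] at hple
    have hlhs : pairE X (t • (x,x') + (1-t) • (y,y')) =
        ((t*(t*(x' x) + (1-t)*(x' y)) + (1-t)*(t*(y' x) + (1-t)*(y' y)) : ℝ) : EReal) := by
      show (((t • (x,x') + (1-t) • (y,y')).2 ((t • (x,x') + (1-t) • (y,y')).1) : ℝ) : EReal) = _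
      rw [EReal.coe_eq_coe_iff]
      simp only [Prod.smul_mk, Prod.mk_add_mk, ContinuousLinearMap.add_apply,
        ContinuousLinearMap.coe_smul', Pi.smul_apply, map_add, map_smul, smul_eq_mul]
      ring
    rw [hlhs] at hple
    have H : t*(t*(x' x) + (1-t)*(x' y)) + (1-t)*(t*(y' x) + (1-t)*(y' y))
        ≤ t*r + (1-t)*(y' y) := by exact_mod_cast hple
    have H2 : t * ((x' y + y' x - y' y) + t * (x' x - x' y - y' x + y' y)) ≤ t * r := by
      nlinarith [H]
    exact le_of_mul_le_mul_left H2 ht0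
  have lim : Filter.Tendsto (fun t : ℝ => (x' y + y' x - y' y) + t * (x' x - x' y - y' x + y' y))
      (nhdsWithin 0 (Set.Ioi 0)) (nhds (x' y + y' x - y' y)) := by
    have h1 : Filter.Tendsto (fun t : ℝ => (x' y + y' x - y' y) + t * (x' x - x' y - y' x + y' y))
        (nhds 0) (nhds ((x' y + y' x - y' y) + 0 * (x' x - x' y - y' x + y' y))) :=
      (tendsto_const_nhds.add ((continuous_id.mul continuous_const).tendsto 0))
    simpa using h1.mono_left nhdsWithin_le_nhds
  refine le_of_tendsto lim ?_
  filter_upwards [Ioo_mem_nhdsGT_of_mem (Set.left_mem_Ico.mpr one_pos)] with t ht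
  exact step t ht

end AuxProofs

theorem statement11 (X : Type*) [NormedAddCommGroup X] [NormedSpace ℝ X] [CompleteSpace X]
    (T : Set (X × StrongDual ℝ X)) (hT : MaxMonotone X T) :
    ∀ h ∈ FitzFamily X T,
      closure (Prod.fst '' edom h) = closure (convexHull ℝ (Prod.fst '' T)) ∧
      wcl X (Prod.snd '' edom h) = wcl X (convexHull ℝ (Prod.snd '' T)) := by
  intro h hh
  have hTdom : T ⊆ edom h := by
    intro w hw
    show h w < ⊤
    rw [hh.2.2.2 w hw]
    exact EReal.coe_lt_top _
  have hdomconv : Convex ℝ (edom h) := by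
    intro z hz w hw a b ha hb hab
    obtain ⟨rz, hrz, -⟩ := fitz_fin hh hz
    obtain ⟨rw', hrw, -⟩ := fitz_fin hh hw
    show h (a • z + b • w) < ⊤
    calc h (a • z + b • w) ≤ (a : EReal) * h z + (b : EReal) * h w := hh.1 z w a b ha hb hab
    _ = ((a * rz + b * rw' : ℝ) : EReal) := by
        rw [hrz, hrw, ← EReal.coe_mul, ← EReal.coe_mul, ← EReal.coe_add]
    _ < ⊤ := EReal.coe_lt_top _
  -- hard direction, strong side
  have hard1 : ∀ z ∈ edom h, z.1 ∈ closure (convexHull ℝ (Prod.fst '' T)) := by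
    intro z hz
    by_contra hout
    obtain ⟨g, α, hlt, hgt⟩ := geometric_hahn_banach_closed_point
      ((convex_convexHull ℝ _).closure) isClosed_closure hout
    obtain ⟨r, hr, hur⟩ := fitz_fin hh hz
    have hd : 0 < g z.1 - α := by linarith
    set t : ℝ := (r - z.2 z.1 + 1) / (g z.1 - α) with htdef
    have ht0 : 0 < t := div_pos (by linarith) hd
    have htprod : t * (g z.1 - α) = r - z.2 z.1 + 1 := by
      rw [htdef]; field_simp
    have htprod' : t * g z.1 - t * α = r - z.2 z.1 + 1 := by
      rw [← mul_sub]; exact htprod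
    by_cases hmem : (z.1, z.2 + t • (g : StrongDual ℝ X)) ∈ T
    · have hmem1 : z.1 ∈ convexHull ℝ (Prod.fst '' T) :=
        subset_convexHull ℝ _ ⟨_, hmem, rfl⟩
      exact absurd (hlt _ (subset_closure hmem1)) (by linarith)
    · obtain ⟨w, hw, hneg⟩ := maxmono_aux hT hmem
      have hkey := fitz_key hh hr hw
      have hwα : g w.1 < α := hlt _ (subset_closure (subset_convexHull ℝ _ ⟨w, hw, rfl⟩))
      have hexp : ((z.1, z.2 + t • (g : StrongDual ℝ X)).2 - w.2) ((z.1, z.2 + t • (g : StrongDual ℝ X)).1 - w.1)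
          = z.2 z.1 - z.2 w.1 - w.2 z.1 + w.2 w.1 + t * (g z.1) - t * (g w.1) := by
        simp only [ContinuousLinearMap.sub_apply, ContinuousLinearMap.add_apply,
          ContinuousLinearMap.coe_smul', Pi.smul_apply, map_sub, smul_eq_mul]
        ring
      rw [hexp] at hneg
      have hmul : t * g w.1 < t * α := mul_lt_mul_of_pos_left hwα ht0
      linarith
  -- hard direction, weak-* side
  have hard2 : ∀ z ∈ edom h, z.2 ∈ wcl X (convexHull ℝ (Prod.snd '' T)) := by
    intro z hz
    by_contra hout
    have hout' : StrongDual.toWeakDual z.2 ∉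
        closure (StrongDual.toWeakDual '' (convexHull ℝ (Prod.snd '' T))) := hout
    have hconv2 : Convex ℝ ((StrongDual.toWeakDual '' (convexHull ℝ (Prod.snd '' T))) :
        Set (WeakDual ℝ X)) :=
      (convex_convexHull ℝ _).linear_image StrongDual.toWeakDual.toLinearMap
    haveI : LocallyConvexSpace ℝ (WeakDual ℝ X) := WeakBilin.locallyConvexSpace
    obtain ⟨F, α, hlt, hgt⟩ := geometric_hahn_banach_closed_point
      hconv2.closure isClosed_closure hout'
    obtain ⟨x, hx⟩ := weakdual_repr F
    have hTb : ∀ w : X × StrongDual ℝ X, w ∈ T → w.2 x < α := by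
      intro w hw
      have := hlt (StrongDual.toWeakDual w.2)
        (subset_closure ⟨w.2, subset_convexHull ℝ _ ⟨w, hw, rfl⟩, rfl⟩)
      rwa [hx w.2] at this
    have hz2 : α < z.2 x := by
      have := hgt
      rwa [hx z.2] at this
    obtain ⟨r, hr, hur⟩ := fitz_fin hh hz
    have hd : 0 < z.2 x - α := by linarith
    set t : ℝ := (r - z.2 z.1 + 1) / (z.2 x - α) with htdef
    have ht0 : 0 < t := div_pos (by linarith) hd
    have htprod : t * (z.2 x - α) = r - z.2 z.1 + 1 := by
      rw [htdef]; field_simp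
    have htprod' : t * z.2 x - t * α = r - z.2 z.1 + 1 := by
      rw [← mul_sub]; exact htprod
    by_cases hmem : ((z.1 + t • x, z.2) : X × StrongDual ℝ X) ∈ T
    · have := hTb _ hmem
      simp only at this
      linarith
    · obtain ⟨w, hw, hneg⟩ := maxmono_aux hT hmem
      have hkey := fitz_key hh hr hw
      have hwα : w.2 x < α := hTb w hw
      have hexp : (((z.1 + t • x, z.2) : X × StrongDual ℝ X).2 - w.2)
          (((z.1 + t • x, z.2) : X × StrongDual ℝ X).1 - w.1)
          = z.2 z.1 + t * (z.2 x) - z.2 w.1 - w.2 z.1 - t * (w.2 x) + w.2 w.1 := by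
        simp only [ContinuousLinearMap.sub_apply, map_sub, map_add, map_smul, smul_eq_mul]
        ring
      rw [hexp] at hneg
      have hmul : t * (w.2 x) < t * α := mul_lt_mul_of_pos_left hwα ht0
      linarith
  -- wcl basics
  have wcl_mono : ∀ {S₁ S₂ : Set (StrongDual ℝ X)}, S₁ ⊆ S₂ → wcl X S₁ ⊆ wcl X S₂ :=
    fun hs => Set.preimage_mono (closure_mono (Set.image_mono hs))
  have wcl_idem : ∀ C : Set (StrongDual ℝ X), wcl X (wcl X C) = wcl X C := by
    intro C
    show StrongDual.toWeakDual ⁻¹' closure (StrongDual.toWeakDual ''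
      (StrongDual.toWeakDual ⁻¹' closure (StrongDual.toWeakDual '' C))) = _
    rw [Set.image_preimage_eq _ (StrongDual.toWeakDual (𝕜 := ℝ) (E := X)).surjective,
      closure_closure]
    rfl
  have hfstconv : Convex ℝ (Prod.fst '' edom h) := by
    have := hdomconv.linear_image (LinearMap.fst ℝ X (StrongDual ℝ X))
    exact this
  have hsndconv : Convex ℝ (Prod.snd '' edom h) := by
    have := hdomconv.linear_image (LinearMap.snd ℝ X (StrongDual ℝ X))
    exact this
  constructor
  · apply Set.Subset.antisymm
    · refine closure_minimal ?_ isClosed_closure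
      rintro _ ⟨z, hz, rfl⟩
      exact hard1 z hz
    · refine closure_mono (convexHull_min ?_ hfstconv)
      exact Set.image_mono hTdom
  · apply Set.Subset.antisymm
    · have h1 : Prod.snd '' edom h ⊆ wcl X (convexHull ℝ (Prod.snd '' T)) := by
        rintro _ ⟨z, hz, rfl⟩
        exact hard2 z hz
      calc wcl X (Prod.snd '' edom h)
          ⊆ wcl X (wcl X (convexHull ℝ (Prod.snd '' T))) := wcl_mono h1
        _ = wcl X (convexHull ℝ (Prod.snd '' T)) := wcl_idem _
    · exact wcl_mono (convexHull_min (Set.image_mono hTdom) hsndconv)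
end

section
/- Let T : X ⇉ X* be a maximal monotone operator. The following are equivalent: (1) R(T) is bounded; (2) for every h ∈ F_T, P₂(D(h)) is bounded; (3) there exists h ∈ F_T such that P₂(D(h)) is bounded; (4) there exists 0 ≤ L < ∞ such that for every h ∈ F_T and every x* ∈ P₂(D(h)), the function x ↦ h(x,x*) is real-valued and |h(x,x*) − h(z,x*)| ≤ L‖x − z‖ for all x, z ∈ X; (5) there exist h ∈ F_T and 0 ≤ L < ∞ such that for every x* ∈ P₂(D(h)), the function x ↦ h(x,x*) is real-valued and |h(x,x*) − h(z,x*)| ≤ L‖x − z‖ for all x, z ∈ X. -/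
open NormedSpace Classical

section AuxProofs

variable {X : Type*} [NormedAddCommGroup X] [NormedSpace ℝ X]

private lemma df_finite {ι : Type*} [Fintype ι] [Nonempty ι] (y : ι → X) (ys : ι → StrongDual ℝ X)
    (mono : ∀ i j, 0 ≤ (ys j - ys i) (y j - y i)) (x₀ : X) :
    ∃ l ∈ stdSimplex ℝ ι, ∀ i, 0 ≤ (∑ j, l j • ys j) (x₀ - y i) - ys i (x₀ - y i) := by
  classical
  set c : ι → ι → ℝ := fun i j => (ys j - ys i) (x₀ - y i) with hc
  set F : (ι → ℝ) →ₗ[ℝ] (ι → ℝ) :=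
    LinearMap.pi (fun i => ∑ j : ι, c i j • (LinearMap.proj j : (ι → ℝ) →ₗ[ℝ] ℝ)) with hF
  have hFapp : ∀ l i, F l i = ∑ j, c i j * l j := by
    intro l i
    simp [hF, LinearMap.pi_apply, LinearMap.sum_apply, smul_eq_mul]
  have hkey : ∀ l ∈ stdSimplex ℝ ι, ∀ i,
      (∑ j, l j • ys j) (x₀ - y i) - ys i (x₀ - y i) = F l i := by
    intro l hl i
    rw [hFapp]
    have hsum : ∑ j, l j = 1 := hl.2
    have e1 : (∑ j, l j • ys j) (x₀ - y i) = ∑ j, l j * (ys j (x₀ - y i)) := by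
      rw [ContinuousLinearMap.sum_apply]
      simp [ContinuousLinearMap.smul_apply, smul_eq_mul]
    rw [e1]
    have e2 : ys i (x₀ - y i) = ∑ j, l j * ys i (x₀ - y i) := by
      rw [← Finset.sum_mul, hsum, one_mul]
    rw [e2, ← Finset.sum_sub_distrib]
    apply Finset.sum_congr rfl
    intro j _
    simp only [hc, ContinuousLinearMap.sub_apply]
    ring
  have hdiag : ∀ l ∈ stdSimplex ℝ ι, 0 ≤ ∑ i, l i * F l i := by
    intro l hl
    have h2 : (2:ℝ) * ∑ i, l i * F l i = ∑ i, ∑ j, l i * l j * (c i j + c j i) := by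
      have e1 : ∑ i, l i * F l i = ∑ i, ∑ j, l i * l j * c i j := by
        apply Finset.sum_congr rfl; intro i _
        rw [hFapp, Finset.mul_sum]
        apply Finset.sum_congr rfl; intro j _; ring
      have e2 : ∑ i : ι, ∑ j : ι, l i * l j * (c i j) = ∑ i : ι, ∑ j : ι, l i * l j * (c j i) := by
        rw [Finset.sum_comm]
        apply Finset.sum_congr rfl; intro i _
        apply Finset.sum_congr rfl; intro j _; ring
      rw [e1, two_mul]
      nth_rewrite 2 [e2]
      rw [← Finset.sum_add_distrib]
      apply Finset.sum_congr rfl; intro i _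
      rw [← Finset.sum_add_distrib]
      apply Finset.sum_congr rfl; intro j _; ring
    have hnn : 0 ≤ ∑ i, ∑ j, l i * l j * (c i j + c j i) := by
      apply Finset.sum_nonneg; intro i _
      apply Finset.sum_nonneg; intro j _
      apply mul_nonneg (mul_nonneg (hl.1 i) (hl.1 j))
      have e3 : c i j + c j i = (ys j - ys i) (y j - y i) := by
        simp only [hc, ContinuousLinearMap.sub_apply, map_sub]
        ring
      rw [e3]; exact mono i j
    linarith
  have hFc : Continuous F := F.continuous_of_finiteDimensional
  set C : Set (ι → ℝ) := F '' (stdSimplex ℝ ι) with hC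
  set O : Set (ι → ℝ) := {z | ∀ i, 0 ≤ z i} with hO
  by_cases hdis : Disjoint C O
  · exfalso
    have hCconv : Convex ℝ C := (convex_stdSimplex ℝ ι).linear_image F
    have hCcomp : IsCompact C := (isCompact_stdSimplex ℝ ι).image hFc
    have hOconv : Convex ℝ O := by
      intro a ha b hb s t hs ht hst
      intro i
      have h1 := ha i
      have h2 := hb i
      have h3 : 0 ≤ s * a i + t * b i := by positivity
      simpa using h3
    have hOcl : IsClosed O := by
      have e : O = ⋂ i, {z : ι → ℝ | 0 ≤ z i} := by ext z; simp [hO]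
      rw [e]
      exact isClosed_iInter fun i => isClosed_le continuous_const (continuous_apply i)
    obtain ⟨g, u, v, hgu, huv, hgv⟩ :=
      geometric_hahn_banach_compact_closed hCconv hCcomp hOconv hOcl hdis
    have hv0 : v < 0 := by
      have h0 : v < g 0 := hgv 0 (by intro i; rfl)
      simpa using h0
    set m : ι → ℝ := fun i => g (Pi.single i (1:ℝ)) with hm
    have hmnn : ∀ i, 0 ≤ m i := by
      intro i
      by_contra hneg
      push_neg at hneg
      set s := (v - 1) / m i with hs
      have hs0 : 0 ≤ s := le_of_lt (div_pos_of_neg_of_neg (by linarith) hneg)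
      have hmem : (s • (Pi.single i (1:ℝ) : ι → ℝ)) ∈ O := by
        intro j
        rw [Pi.smul_apply, smul_eq_mul]
        apply mul_nonneg hs0
        rcases eq_or_ne j i with hji | hji
        · subst hji; simp
        · simp [Pi.single_apply, hji]
      have hlt := hgv _ hmem
      rw [map_smul, smul_eq_mul] at hlt
      have hsv : s * m i = v - 1 := by
        rw [hs, div_mul_cancel₀ _ (ne_of_lt hneg)]
      rw [show g (Pi.single i (1:ℝ)) = m i from rfl, hsv] at hlt
      linarith
    have hg_eq : ∀ z : ι → ℝ, g z = ∑ i, z i * m i := by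
      intro z
      have hz : z = ∑ i, z i • (Pi.single i (1:ℝ) : ι → ℝ) := by
        funext j
        simp [Pi.single_apply, Finset.sum_apply]
      nth_rewrite 1 [hz]
      rw [map_sum]
      apply Finset.sum_congr rfl
      intro i _
      rw [map_smul]; simp [hm]
    set s := ∑ i, m i with hsm
    have hspos : 0 < s := by
      rcases lt_or_eq_of_le (Finset.sum_nonneg (fun i _ => hmnn i)) with hlt | heq
      · exact hlt
      · exfalso
        have hall : ∀ i ∈ Finset.univ, m i = (0:ℝ) :=
          (Finset.sum_eq_zero_iff_of_nonneg (fun i _ => hmnn i)).mp heq.symm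
        have hg0 : ∀ z, g z = 0 := by
          intro z; rw [hg_eq]
          apply Finset.sum_eq_zero; intro i hi; rw [hall i hi]; ring
        have hmem : (fun _ => (Fintype.card ι : ℝ)⁻¹) ∈ stdSimplex ℝ ι := by
          constructor
          · intro i; positivity
          · rw [Finset.sum_const]
            simp only [nsmul_eq_mul, Finset.card_univ]
            rw [mul_inv_cancel₀]
            exact_mod_cast Fintype.card_ne_zero
        have hlt := hgu _ ⟨_, hmem, rfl⟩
        rw [hg0] at hlt
        linarith
    set l : ι → ℝ := fun i => m i / s with hldef
    have hlmem : l ∈ stdSimplex ℝ ι := by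
      constructor
      · intro i; exact div_nonneg (hmnn i) (le_of_lt hspos)
      · rw [← Finset.sum_div, ← hsm, div_self (ne_of_gt hspos)]
    have h1 : g (F l) < u := hgu _ ⟨l, hlmem, rfl⟩
    have h2 : g (F l) = s * ∑ i, l i * F l i := by
      rw [hg_eq, Finset.mul_sum]
      apply Finset.sum_congr rfl
      intro i _
      simp only [hldef]
      field_simp
    have h3 := hdiag l hlmem
    nlinarith
  · rw [Set.not_disjoint_iff] at hdis
    obtain ⟨z, ⟨l, hl, rfl⟩, hzO⟩ := hdis
    refine ⟨l, hl, fun i => ?_⟩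
    rw [hkey l hl i]
    exact hzO i

private lemma debrunner_flor {T : Set (X × StrongDual ℝ X)} (hmono : MonotoneSet X T) {M : ℝ}
    (hM0 : 0 ≤ M) (hM : ∀ w ∈ T, ‖w.2‖ ≤ M) (x₀ : X) :
    ∃ p : StrongDual ℝ X, ‖p‖ ≤ M ∧ ∀ w ∈ T, 0 ≤ (p - w.2) (x₀ - w.1) := by
  classical
  set K : Set (WeakDual ℝ X) := (⇑WeakDual.toStrongDual ⁻¹' Metric.closedBall 0 M) with hK
  have hKc : IsCompact K := WeakDual.isCompact_closedBall 0 M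
  set t : ↥T → Set (WeakDual ℝ X) :=
    fun w => {φ | 0 ≤ φ (x₀ - (w:X × StrongDual ℝ X).1) - (w:X × StrongDual ℝ X).2 (x₀ - (w:X × StrongDual ℝ X).1)}
    with ht
  have htcl : ∀ w, IsClosed (t w) := by
    intro w
    apply isClosed_le continuous_const
    exact ((WeakDual.eval_continuous (x₀ - (w:X × StrongDual ℝ X).1)).sub continuous_const)
  have hFIP : ∀ u : Finset ↥T, (K ∩ ⋂ w ∈ u, t w).Nonempty := by
    intro u
    rcases u.eq_empty_or_nonempty with rfl | hu
    · refine ⟨StrongDual.toWeakDual (0 : StrongDual ℝ X), ?_, by simp⟩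
      simp only [hK, Set.mem_preimage]
      simpa [Metric.mem_closedBall] using hM0
    · have : Nonempty ↥u := ⟨⟨hu.choose, hu.choose_spec⟩⟩
      set yy : ↥u → X := fun i => ((i : ↥T) : X × StrongDual ℝ X).1 with hyy
      set yys : ↥u → StrongDual ℝ X := fun i => ((i : ↥T) : X × StrongDual ℝ X).2 with hyys
      have monoF : ∀ i j : ↥u, 0 ≤ (yys j - yys i) (yy j - yy i) := by
        intro i j
        exact hmono _ ((j : ↥T).2) _ ((i : ↥T).2)
      obtain ⟨l, hl, hsol⟩ := df_finite yy yys monoF x₀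
      set ψ : StrongDual ℝ X := ∑ j, l j • yys j with hψ
      refine ⟨StrongDual.toWeakDual ψ, ?_, ?_⟩
      · simp only [hK, Set.mem_preimage]
        rw [Metric.mem_closedBall]
        have h1 : WeakDual.toStrongDual (StrongDual.toWeakDual ψ) = ψ := rfl
        rw [h1, dist_zero_right]
        calc ‖ψ‖ ≤ ∑ j, ‖l j • yys j‖ := norm_sum_le _ _
          _ ≤ ∑ j, l j * M := by
              apply Finset.sum_le_sum
              intro j _
              rw [norm_smul, Real.norm_eq_abs, abs_of_nonneg (hl.1 j)]
              exact mul_le_mul_of_nonneg_left (hM _ ((j : ↥T).2)) (hl.1 j)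
          _ = M := by rw [← Finset.sum_mul, hl.2, one_mul]
      · rw [Set.mem_iInter₂]
        intro w hw
        have hs2 := hsol ⟨w, hw⟩
        exact hs2
  obtain ⟨φ, hφK, hφt⟩ := hKc.inter_iInter_nonempty t htcl hFIP
  refine ⟨WeakDual.toStrongDual φ, ?_, ?_⟩
  · have h0 := hφK
    rw [hK, Set.mem_preimage, Metric.mem_closedBall, dist_zero_right] at h0
    exact h0
  · intro w hw
    have h1 : φ ∈ t ⟨w, hw⟩ := by
      rw [Set.mem_iInter] at hφt
      exact hφt ⟨w, hw⟩
    have h2 : 0 ≤ φ (x₀ - w.1) - w.2 (x₀ - w.1) := h1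
    simpa [ContinuousLinearMap.sub_apply] using h2

private lemma symm_pair (p q : StrongDual ℝ X) (u v : X) : (p - q) (u - v) = (q - p) (v - u) := by
  simp only [ContinuousLinearMap.sub_apply, map_sub]
  ring

private lemma dom_all {T : Set (X × StrongDual ℝ X)} (hT : MaxMonotone X T) {M : ℝ} (hM0 : 0 ≤ M)
    (hM : ∀ w ∈ T, ‖w.2‖ ≤ M) (x : X) :
    ∃ p : StrongDual ℝ X, ‖p‖ ≤ M ∧ (x, p) ∈ T := by
  obtain ⟨p, hpM, hp⟩ := debrunner_flor hT.1 hM0 hM x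
  refine ⟨p, hpM, ?_⟩
  have hmonoS : MonotoneSet X (insert (x, p) T) := by
    intro a ha b hb
    rcases ha with rfl | ha <;> rcases hb with rfl | hb
    · simp
    · exact hp b hb
    · rw [show (a.2 - p) (a.1 - x) = (p - a.2) (x - a.1) from symm_pair _ _ _ _]
      exact hp a ha
    · exact hT.1 a ha b hb
  have hST := hT.2 _ hmonoS (Set.subset_insert _ _)
  rw [← hST]
  exact Set.mem_insert _ _

/-- the affine functions whose sup is the Fitzpatrick function -/
private def fitzL (w z : X × StrongDual ℝ X) : ℝ := w.2 z.1 + z.2 w.1 - w.2 w.1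

/-- the Fitzpatrick function -/
private noncomputable def fitzFn (T : Set (X × StrongDual ℝ X)) : X × StrongDual ℝ X → EReal :=
  fun z => ⨆ w : T, ((fitzL (w : X × StrongDual ℝ X) z : ℝ) : EReal)

private lemma fitzFn_mem {T : Set (X × StrongDual ℝ X)} (hT : MaxMonotone X T) :
    fitzFn T ∈ FitzFamily X T := by
  have hge : ∀ z, pairE X z ≤ fitzFn T z := by
    intro z
    by_cases hz : z ∈ T
    · have he : pairE X z = ((fitzL z z : ℝ) : EReal) := by
        simp [pairE, fitzL]
      rw [he]
      exact le_iSup (fun w : T => ((fitzL (w : X × StrongDual ℝ X) z : ℝ) : EReal)) ⟨z, hz⟩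
    · have hnm : ¬ MonotoneSet X (insert z T) := by
        intro hmono
        have h0 := hT.2 _ hmono (Set.subset_insert _ _)
        exact hz (h0 ▸ Set.mem_insert _ _)
      rw [MonotoneSet] at hnm
      push_neg at hnm
      obtain ⟨p, hp, q, hq, hpq⟩ := hnm
      have hw : ∃ w ∈ T, (z.2 - w.2) (z.1 - w.1) < 0 := by
        rcases Set.mem_insert_iff.mp hp with hp1 | hp1 <;>
          rcases Set.mem_insert_iff.mp hq with hq1 | hq1
        · exfalso; rw [hp1, hq1] at hpq; simp at hpq
        · refine ⟨q, hq1, ?_⟩; rw [hp1] at hpq; exact hpq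
        · refine ⟨p, hp1, ?_⟩
          rw [hq1] at hpq
          rw [show (z.2 - p.2) (z.1 - p.1) = (p.2 - z.2) (p.1 - z.1) by
            simp only [ContinuousLinearMap.sub_apply, map_sub]; ring]
          exact hpq
        · exact absurd (hT.1 p hp1 q hq1) (not_le.mpr hpq)
      obtain ⟨w, hwT, hwlt⟩ := hw
      have hlt : z.2 z.1 < fitzL w z := by
        simp only [ContinuousLinearMap.sub_apply, map_sub] at hwlt
        simp only [fitzL]
        linarith
      calc pairE X z = ((z.2 z.1 : ℝ) : EReal) := rfl
        _ ≤ ((fitzL w z : ℝ) : EReal) := by exact_mod_cast le_of_lt hlt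
        _ ≤ fitzFn T z := le_iSup (fun w : T => ((fitzL (w : X × StrongDual ℝ X) z : ℝ) : EReal)) ⟨w, hwT⟩
  refine ⟨?_, ?_, hge, ?_⟩
  · intro x y a b ha hb hab
    rw [fitzFn]
    apply iSup_le
    intro w
    have hkey : fitzL (w : X × StrongDual ℝ X) (a • x + b • y)
        = a * fitzL (w : X × StrongDual ℝ X) x + b * fitzL (w : X × StrongDual ℝ X) y := by
      simp only [fitzL, Prod.fst_add, Prod.snd_add, Prod.smul_fst, Prod.smul_snd,
        map_add, map_smul, ContinuousLinearMap.add_apply, ContinuousLinearMap.smul_apply,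
        smul_eq_mul]
      have he : (w : X × StrongDual ℝ X).2 (w : X × StrongDual ℝ X).1
          = (a + b) * ((w : X × StrongDual ℝ X).2 (w : X × StrongDual ℝ X).1) := by rw [hab, one_mul]
      nth_rewrite 1 [he]
      ring
    rw [hkey]
    have h1 : ((a * fitzL (w : X × StrongDual ℝ X) x + b * fitzL (w : X × StrongDual ℝ X) y : ℝ) : EReal)
        = (a : EReal) * ((fitzL (w : X × StrongDual ℝ X) x : ℝ) : EReal)
          + (b : EReal) * ((fitzL (w : X × StrongDual ℝ X) y : ℝ) : EReal) := by
      rw [EReal.coe_add, EReal.coe_mul, EReal.coe_mul]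
    rw [h1]
    apply add_le_add
    · exact mul_le_mul_of_nonneg_left
        (le_iSup (fun w : T => ((fitzL (w : X × StrongDual ℝ X) x : ℝ) : EReal)) w)
        (by exact_mod_cast ha)
    · exact mul_le_mul_of_nonneg_left
        (le_iSup (fun w : T => ((fitzL (w : X × StrongDual ℝ X) y : ℝ) : EReal)) w)
        (by exact_mod_cast hb)
  · apply lowerSemicontinuous_iSup
    intro w
    apply Continuous.lowerSemicontinuous
    apply continuous_coe_real_ereal.comp
    apply Continuous.sub
    apply Continuous.add
    · exact (w : X × StrongDual ℝ X).2.continuous.comp continuous_fst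
    · exact ((ContinuousLinearMap.apply ℝ ℝ ((w : X × StrongDual ℝ X).1)).continuous).comp
        continuous_snd
    · exact continuous_const
  · intro z hz
    apply le_antisymm
    · apply iSup_le
      intro w
      have h0 := hT.1 z hz (w : X × StrongDual ℝ X) w.2
      simp only [ContinuousLinearMap.sub_apply, map_sub] at h0
      have h1 : fitzL (w : X × StrongDual ℝ X) z ≤ z.2 z.1 := by
        simp only [fitzL]; linarith
      simp only [pairE]
      exact_mod_cast h1
    · exact hge z

private lemma hge_ne_bot {h : X × StrongDual ℝ X → EReal}
    (hge : ∀ z, pairE X z ≤ h z) (z : X × StrongDual ℝ X) : h z ≠ ⊥ := by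
  intro hb
  have h1 := hge z
  rw [hb, le_bot_iff] at h1
  exact EReal.coe_ne_bot _ h1

set_option maxHeartbeats 2000000 in
private lemma key_lip {T : Set (X × StrongDual ℝ X)} {M : ℝ}
    (hM : ∀ w ∈ T, ‖w.2‖ ≤ M) (hD : ∀ x : X, ∃ p, (x, p) ∈ T)
    {h : X × StrongDual ℝ X → EReal} (hh : h ∈ FitzFamily X T)
    (y : StrongDual ℝ X) (z x : X) (hz : h (z, y) ≠ ⊤) :
    h (x, y) ≤ h (z, y) + ((M * ‖x - z‖ : ℝ) : EReal) := by
  obtain ⟨hconv, hlsc, hge, heq⟩ := hh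
  have hzb : h (z, y) ≠ ⊥ := hge_ne_bot hge _
  set r := (h (z, y)).toReal with hr
  have hzr : h (z, y) = (r : EReal) := (EReal.coe_toReal hz hzb).symm
  by_contra hcon
  push_neg at hcon
  have hBless : ((r + M * ‖x - z‖ : ℝ) : EReal) < h (x, y) := by
    rw [EReal.coe_add, ← hzr]
    exact hcon
  obtain ⟨c, hc1, hc2⟩ := EReal.exists_between_coe_real hBless
  have hc1' : r + M * ‖x - z‖ < c := by exact_mod_cast hc1
  have hU := hlsc (x, y) (c : EReal) hc2
  rw [Metric.eventually_nhds_iff] at hU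
  obtain ⟨ε, hε, hball⟩ := hU
  have ev1 : ∀ᶠ t in nhdsWithin (0:ℝ) (Set.Ioi 0), 0 < t :=
    eventually_mem_nhdsWithin
  have ev2 : ∀ᶠ t in nhdsWithin (0:ℝ) (Set.Ioi 0), t < 1 :=
    ((isOpen_Iio (a := (1:ℝ))).eventually_mem (by norm_num : (0:ℝ) ∈ Set.Iio 1)).filter_mono
      nhdsWithin_le_nhds
  have hcont3 : Filter.Tendsto (fun t : ℝ => (1 - t) * r + t * (M * ‖z‖) + M * ‖x - z‖)
      (nhds 0) (nhds (r + M * ‖x - z‖)) := by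
    have hcts : Continuous (fun t : ℝ => (1 - t) * r + t * (M * ‖z‖) + M * ‖x - z‖) :=
      (((continuous_const.sub continuous_id).mul continuous_const).add
        (continuous_id.mul continuous_const)).add continuous_const
    have h0 := hcts.tendsto 0
    simpa using h0
  have ev3 : ∀ᶠ t in nhdsWithin (0:ℝ) (Set.Ioi 0),
      (1 - t) * r + t * (M * ‖z‖) + M * ‖x - z‖ < c :=
    (hcont3.eventually_lt_const hc1').filter_mono nhdsWithin_le_nhds
  have hcont4 : Filter.Tendsto (fun t : ℝ => t * (M + ‖y‖ + 1)) (nhds 0) (nhds 0) := by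
    have hcts : Continuous (fun t : ℝ => t * (M + ‖y‖ + 1)) :=
      continuous_id.mul continuous_const
    have h0 := hcts.tendsto 0
    simpa using h0
  have ev4 : ∀ᶠ t in nhdsWithin (0:ℝ) (Set.Ioi 0), t * (M + ‖y‖ + 1) < ε :=
    (hcont4.eventually_lt_const hε).filter_mono nhdsWithin_le_nhds
  obtain ⟨t, ht0, ht1, hev3, hev4⟩ := (ev1.and (ev2.and (ev3.and ev4))).exists
  set w : X := z + t⁻¹ • (x - z) with hw
  obtain ⟨ps, hpsT⟩ := hD w
  have hpsM : ‖ps‖ ≤ M := hM _ hpsT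
  have hcomb := hconv (z, y) (w, ps) (1 - t) t (by linarith) (le_of_lt ht0) (by ring)
  have hfst : (1 - t) • z + t • w = x := by
    rw [hw, smul_add, smul_smul, mul_inv_cancel₀ (ne_of_gt ht0), one_smul, ← add_assoc,
      ← add_smul, sub_add_cancel, one_smul, add_sub_cancel]
  have hpt : ((1 - t) • ((z, y) : X × StrongDual ℝ X) + t • ((w, ps) : X × StrongDual ℝ X))
      = (x, (1 - t) • y + t • ps) := by
    rw [Prod.smul_mk, Prod.smul_mk, Prod.mk_add_mk, hfst]
  rw [hpt] at hcomb
  have hval : h (w, ps) = ((ps w : ℝ) : EReal) := heq _ hpsT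
  have hrhs : ((1 - t : ℝ) : EReal) * h (z, y) + ((t : ℝ) : EReal) * h (w, ps)
      = (((1 - t) * r + t * (ps w) : ℝ) : EReal) := by
    rw [hzr, hval, ← EReal.coe_mul, ← EReal.coe_mul, ← EReal.coe_add]
  rw [hrhs] at hcomb
  have hreal : (1 - t) * r + t * (ps w) ≤ (1 - t) * r + t * (M * ‖z‖) + M * ‖x - z‖ := by
    have h1 : ps w = ps z + t⁻¹ * ps (x - z) := by
      rw [hw, map_add, map_smul, smul_eq_mul]
    have h2 : t * ps w = t * ps z + ps (x - z) := by
      rw [h1, mul_add, ← mul_assoc, mul_inv_cancel₀ (ne_of_gt ht0), one_mul]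
    have h3 : ps z ≤ M * ‖z‖ :=
      le_trans (le_abs_self _) (le_trans (ps.le_opNorm z)
        (mul_le_mul_of_nonneg_right hpsM (norm_nonneg _)))
    have h4 : ps (x - z) ≤ M * ‖x - z‖ :=
      le_trans (le_abs_self _) (le_trans (ps.le_opNorm _)
        (mul_le_mul_of_nonneg_right hpsM (norm_nonneg _)))
    have h5 : t * ps z ≤ t * (M * ‖z‖) := mul_le_mul_of_nonneg_left h3 (le_of_lt ht0)
    rw [h2]
    linarith
  have hdist : dist ((x, (1 - t) • y + t • ps) : X × StrongDual ℝ X) ((x, y) : X × StrongDual ℝ X) < ε := by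
    rw [Prod.dist_eq]
    simp only [dist_self]
    rw [max_eq_right dist_nonneg, dist_eq_norm]
    have e1 : (1 - t) • y + t • ps - y = t • (ps - y) := by
      module
    rw [e1, norm_smul, Real.norm_eq_abs, abs_of_pos ht0]
    calc t * ‖ps - y‖ ≤ t * (M + ‖y‖) := by
          apply mul_le_mul_of_nonneg_left _ (le_of_lt ht0)
          calc ‖ps - y‖ ≤ ‖ps‖ + ‖y‖ := norm_sub_le _ _
            _ ≤ M + ‖y‖ := by linarith
      _ < ε := by nlinarith
  have hlow := hball hdist
  have hupper : h (x, (1 - t) • y + t • ps) < (c : EReal) := by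
    apply lt_of_le_of_lt hcomb
    exact_mod_cast lt_of_le_of_lt hreal hev3
  exact absurd (lt_trans hlow hupper) (lt_irrefl _)

private lemma lip_all {T : Set (X × StrongDual ℝ X)} {M : ℝ}
    (hM : ∀ w ∈ T, ‖w.2‖ ≤ M) (hD : ∀ x : X, ∃ p, (x, p) ∈ T)
    {h : X × StrongDual ℝ X → EReal} (hh : h ∈ FitzFamily X T) :
    ∀ y ∈ Prod.snd '' edom h, (∀ x : X, h (x, y) ≠ ⊤ ∧ h (x, y) ≠ ⊥) ∧
      ∀ x z : X, |(h (x, y)).toReal - (h (z, y)).toReal| ≤ M * ‖x - z‖ := by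
  intro y hy
  obtain ⟨w, hw, hw2⟩ := hy
  have hge : ∀ z, pairE X z ≤ h z := hh.2.2.1
  have hx₀ : h (w.1, y) ≠ ⊤ := by
    rw [← hw2]
    exact ne_of_lt hw
  have hfin : ∀ x : X, h (x, y) ≠ ⊤ := by
    intro x
    have hk := key_lip hM hD hh y w.1 x hx₀
    have hb : h (w.1, y) ≠ ⊥ := hge_ne_bot hge _
    rw [(EReal.coe_toReal hx₀ hb).symm, ← EReal.coe_add] at hk
    exact ne_top_of_le_ne_top (EReal.coe_ne_top _) hk
  refine ⟨fun x => ⟨hfin x, hge_ne_bot hge _⟩, ?_⟩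
  intro x z
  have hxt := hfin x
  have hzt := hfin z
  have hxb : h (x, y) ≠ ⊥ := hge_ne_bot hge _
  have hzb : h (z, y) ≠ ⊥ := hge_ne_bot hge _
  have hk1 := key_lip hM hD hh y z x hzt
  have hk2 := key_lip hM hD hh y x z hxt
  rw [(EReal.coe_toReal hzt hzb).symm, ← EReal.coe_add] at hk1
  rw [(EReal.coe_toReal hxt hxb).symm, ← EReal.coe_add] at hk2
  have hr1 : (h (x, y)).toReal ≤ (h (z, y)).toReal + M * ‖x - z‖ := by
    have := EReal.toReal_le_toReal hk1 hxb (EReal.coe_ne_top _)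
    rwa [EReal.toReal_coe] at this
  have hr2 : (h (z, y)).toReal ≤ (h (x, y)).toReal + M * ‖z - x‖ := by
    have := EReal.toReal_le_toReal hk2 hzb (EReal.coe_ne_top _)
    rwa [EReal.toReal_coe] at this
  rw [norm_sub_rev] at hr2
  rw [abs_sub_le_iff]
  constructor <;> linarith

private lemma bound_of_lip {h : X × StrongDual ℝ X → EReal}
    (hge : ∀ z, pairE X z ≤ h z) {L : ℝ} (hL0 : 0 ≤ L)
    (hlip : ∀ y ∈ Prod.snd '' edom h, (∀ x : X, h (x, y) ≠ ⊤ ∧ h (x, y) ≠ ⊥) ∧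
      ∀ x z : X, |(h (x, y)).toReal - (h (z, y)).toReal| ≤ L * ‖x - z‖) :
    Prod.snd '' edom h ⊆ Metric.closedBall 0 L := by
  intro y hy
  obtain ⟨hfin, hlp⟩ := hlip y hy
  set c := (h (0, y)).toReal with hc
  have hykx : ∀ x : X, y x ≤ c + L * ‖x‖ := by
    intro x
    have hpe : ((y x : ℝ) : EReal) ≤ h (x, y) := hge (x, y)
    have h1 : y x ≤ (h (x, y)).toReal := by
      have := EReal.toReal_le_toReal hpe (EReal.coe_ne_bot _) (hfin x).1
      rwa [EReal.toReal_coe] at this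
    have h2 : (h (x, y)).toReal - c ≤ L * ‖x - 0‖ := (abs_le.mp (hlp x 0)).2
    rw [sub_zero] at h2
    linarith
  have hyle : ∀ x : X, y x ≤ L * ‖x‖ := by
    intro x
    have htend : Filter.Tendsto (fun t : ℝ => c / t + L * ‖x‖) Filter.atTop
        (nhds (L * ‖x‖)) := by
      have h0 : Filter.Tendsto (fun t : ℝ => c / t) Filter.atTop (nhds 0) :=
        Filter.Tendsto.div_atTop tendsto_const_nhds Filter.tendsto_id
      have h1 := h0.add (tendsto_const_nhds (x := L * ‖x‖) (f := Filter.atTop))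
      simpa using h1
    apply ge_of_tendsto htend
    filter_upwards [Filter.eventually_gt_atTop (0:ℝ)] with t ht
    have hs := hykx (t • x)
    rw [map_smul, smul_eq_mul, norm_smul, Real.norm_eq_abs, abs_of_pos ht] at hs
    have hct : c / t * t = c := div_mul_cancel₀ c (ne_of_gt ht)
    nlinarith
  rw [Metric.mem_closedBall, dist_zero_right]
  apply ContinuousLinearMap.opNorm_le_bound y hL0
  intro x
  rw [Real.norm_eq_abs]
  apply abs_le.mpr
  constructor
  · have := hyle (-x)
    rw [map_neg, norm_neg] at this
    linarith
  · exact hyle x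

end AuxProofs


theorem statement14 (X : Type*) [NormedAddCommGroup X] [NormedSpace ℝ X] [CompleteSpace X]
    (T : Set (X × StrongDual ℝ X)) (hT : MaxMonotone X T) :
    List.TFAE [
      Bornology.IsBounded (Prod.snd '' T),
      ∀ h ∈ FitzFamily X T, Bornology.IsBounded (Prod.snd '' edom h),
      ∃ h ∈ FitzFamily X T, Bornology.IsBounded (Prod.snd '' edom h),
      ∃ L : ℝ, 0 ≤ L ∧ ∀ h ∈ FitzFamily X T, ∀ y ∈ Prod.snd '' edom h,
        (∀ x : X, h (x, y) ≠ ⊤ ∧ h (x, y) ≠ ⊥) ∧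
        ∀ x z : X, |(h (x, y)).toReal - (h (z, y)).toReal| ≤ L * ‖x - z‖,
      ∃ h ∈ FitzFamily X T, ∃ L : ℝ, 0 ≤ L ∧ ∀ y ∈ Prod.snd '' edom h,
        (∀ x : X, h (x, y) ≠ ⊤ ∧ h (x, y) ≠ ⊥) ∧
        ∀ x z : X, |(h (x, y)).toReal - (h (z, y)).toReal| ≤ L * ‖x - z‖ ] := by
  tfae_have 1 → 4 := by
    intro h1
    obtain ⟨R, hR⟩ := (Metric.isBounded_iff_subset_closedBall 0).mp h1
    set M := max R 0 with hMdef
    have hM0 : 0 ≤ M := le_max_right _ _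
    have hM : ∀ w ∈ T, ‖w.2‖ ≤ M := by
      intro w hw
      have hmem := hR ⟨w, hw, rfl⟩
      rw [Metric.mem_closedBall, dist_zero_right] at hmem
      exact le_trans hmem (le_max_left _ _)
    have hD : ∀ x : X, ∃ p, (x, p) ∈ T := fun x => by
      obtain ⟨p, _, hp⟩ := dom_all hT hM0 hM x
      exact ⟨p, hp⟩
    exact ⟨M, hM0, fun h hh y hy => lip_all hM hD hh y hy⟩
  tfae_have 4 → 2 := by
    intro h4a h hh
    obtain ⟨L, hL0, h4⟩ := h4a
    apply Bornology.IsBounded.subset (Metric.isBounded_closedBall (x := (0 : StrongDual ℝ X)) (r := L))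
    exact bound_of_lip hh.2.2.1 hL0 (h4 h hh)
  tfae_have 4 → 5 := by
    intro h4a
    obtain ⟨L, hL0, h4⟩ := h4a
    exact ⟨fitzFn T, fitzFn_mem hT, L, hL0, h4 _ (fitzFn_mem hT)⟩
  tfae_have 2 → 3 := by
    intro h2
    exact ⟨fitzFn T, fitzFn_mem hT, h2 _ (fitzFn_mem hT)⟩
  tfae_have 5 → 3 := by
    intro h5
    obtain ⟨h, hh, L, hL0, hlip⟩ := h5
    refine ⟨h, hh, ?_⟩
    apply Bornology.IsBounded.subset (Metric.isBounded_closedBall (x := (0 : StrongDual ℝ X)) (r := L))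
    exact bound_of_lip hh.2.2.1 hL0 hlip
  tfae_have 3 → 1 := by
    intro h3
    obtain ⟨h, hh, hb⟩ := h3
    apply hb.subset
    apply Set.image_mono
    intro z hz
    show h z < ⊤
    rw [hh.2.2.2 z hz]
    exact EReal.coe_lt_top _
  tfae_finish
end
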